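/- arXiv:2512.22640 — 12 statements merged into one kernel-verified Lean document; each statement's English description precedes it below -/
import Mathlib

section
/- For all f and α, sp(f - f|_α) = sp(f) ∩ {γ : γ ≥ α}. -/
theorem stmt_5
    (C : Type*) [Field C] (E : Type*) [AddCommGroup E] [Module C E]
    (Γ : Type*) [LinearOrder Γ]
    (v : E → WithTop Γ)
    (hv0 : ∀ f : E, v f = ⊤ ↔ f = 0)
    (hvc : ∀ (c : C) (f : E), c ≠ 0 → v (c • f) = v f)
    (hva : ∀ f g : E, min (v f) (v g) ≤ v (f + g))
    (tr : E → Γ → E)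
    (t1 : ∀ (f : E) (α : Γ), (α : WithTop Γ) ≤ v (f - tr f α))
    (t2 : ∀ (f : E) (α : Γ), (α : WithTop Γ) ≤ v f → tr f α = 0)
    (t3 : ∀ (f : E) (α β : Γ), α < β → tr (tr f α) β = tr f α)
    (t4a : ∀ (f g : E) (α : Γ), tr (f + g) α = tr f α + tr g α)
    (t4s : ∀ (c : C) (f : E) (α : Γ), tr (c • f) α = c • tr f α)
    (f : E) (α : Γ) :
    {γ : Γ | v ((f - tr f α) - tr (f - tr f α) γ) = (γ : WithTop Γ)} =
      {γ : Γ | v (f - tr f γ) = (γ : WithTop Γ)} ∩ {γ : Γ | α ≤ γ} := by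
  have tsub : ∀ (a b : E) (δ : Γ), tr (a - b) δ = tr a δ - tr b δ := by
    intro a b δ
    have h1 : a - b = a + (-1 : C) • b := by
      rw [neg_one_smul]; abel
    rw [h1, t4a, t4s, neg_one_smul]
    abel
  ext γ
  simp only [Set.mem_setOf_eq, Set.mem_inter_iff]
  rcases lt_trichotomy γ α with h | h | h
  · have hg : (γ : WithTop Γ) ≤ v (f - tr f α) :=
      le_trans (by exact_mod_cast h.le) (t1 f α)
    have h0 : tr (f - tr f α) γ = 0 := t2 _ _ hg
    rw [h0, sub_zero]
    constructor
    · intro he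
      have ht := t1 f α
      rw [he] at ht
      exact (absurd (WithTop.coe_le_coe.mp ht) (not_le.mpr h) : False).elim
    · rintro ⟨_, hle⟩
      exact absurd hle (not_le.mpr h)
  · subst h
    have h0 : tr (f - tr f γ) γ = 0 := t2 _ _ (t1 f γ)
    rw [h0, sub_zero]
    exact ⟨fun he => ⟨he, le_refl γ⟩, fun ⟨he, _⟩ => he⟩
  · have hkey : tr (f - tr f α) γ = tr f γ - tr f α := by
      rw [tsub, t3 f α γ h]
    have heq : (f - tr f α) - tr (f - tr f α) γ = f - tr f γ := by
      rw [hkey]; abel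
    rw [heq]
    exact ⟨fun he => ⟨he, h.le⟩, fun ⟨he, _⟩ => he⟩
end

section
/- If v(f - f|_α) = β (with β ∈ Γ, i.e., f|_α ≠ f), then β ∈ sp(f) and moreover f|_α = f|_β. -/
theorem stmt_6
    (C : Type*) [Field C] (E : Type*) [AddCommGroup E] [Module C E]
    (Γ : Type*) [LinearOrder Γ]
    (v : E → WithTop Γ)
    (hv0 : ∀ f : E, v f = ⊤ ↔ f = 0)
    (hvc : ∀ (c : C) (f : E), c ≠ 0 → v (c • f) = v f)
    (hva : ∀ f g : E, min (v f) (v g) ≤ v (f + g))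
    (tr : E → Γ → E)
    (t1 : ∀ (f : E) (α : Γ), (α : WithTop Γ) ≤ v (f - tr f α))
    (t2 : ∀ (f : E) (α : Γ), (α : WithTop Γ) ≤ v f → tr f α = 0)
    (t3 : ∀ (f : E) (α β : Γ), α < β → tr (tr f α) β = tr f α)
    (t4a : ∀ (f g : E) (α : Γ), tr (f + g) α = tr f α + tr g α)
    (t4s : ∀ (c : C) (f : E) (α : Γ), tr (c • f) α = c • tr f α)
    (f : E) (α β : Γ) (h : v (f - tr f α) = (β : WithTop Γ)) :
    v (f - tr f β) = (β : WithTop Γ) ∧ tr f α = tr f β := by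
  have hαβ : α ≤ β := by
    have := t1 f α
    rw [h] at this
    exact_mod_cast this
  rcases eq_or_lt_of_le hαβ with rfl | hlt
  · exact ⟨h, rfl⟩
  · have hneg : ∀ (g : E) (γ : Γ), tr (-g) γ = -(tr g γ) := by
      intro g γ
      have := t4s (-1 : C) g γ
      simpa using this
    have h0 : tr (f - tr f α) β = 0 := t2 _ _ (le_of_eq h.symm)
    have h1 : tr (f - tr f α) β = tr f β - tr f α := by
      rw [sub_eq_add_neg, t4a, hneg, t3 f α β hlt, ← sub_eq_add_neg]
    have heq : tr f α = tr f β := by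
      have := h1 ▸ h0
      exact (sub_eq_zero.mp this).symm
    exact ⟨heq ▸ h, heq⟩
end

section
/- For all f and α: if α > γ for every γ ∈ sp(f), then f|_α = f; otherwise f|_α = f|_β for a unique β ∈ sp(f), and α ≤ β for this β. -/
theorem stmt_7
    (C : Type*) [Field C] (E : Type*) [AddCommGroup E] [Module C E]
    (Γ : Type*) [LinearOrder Γ]
    (v : E → WithTop Γ)
    (hv0 : ∀ f : E, v f = ⊤ ↔ f = 0)
    (hvc : ∀ (c : C) (f : E), c ≠ 0 → v (c • f) = v f)
    (hva : ∀ f g : E, min (v f) (v g) ≤ v (f + g))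
    (tr : E → Γ → E)
    (t1 : ∀ (f : E) (α : Γ), (α : WithTop Γ) ≤ v (f - tr f α))
    (t2 : ∀ (f : E) (α : Γ), (α : WithTop Γ) ≤ v f → tr f α = 0)
    (t3 : ∀ (f : E) (α β : Γ), α < β → tr (tr f α) β = tr f α)
    (t4a : ∀ (f g : E) (α : Γ), tr (f + g) α = tr f α + tr g α)
    (t4s : ∀ (c : C) (f : E) (α : Γ), tr (c • f) α = c • tr f α)
    (f : E) (α : Γ) :
    ((∀ γ ∈ {γ : Γ | v (f - tr f γ) = (γ : WithTop Γ)}, γ < α) → tr f α = f) ∧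
    (¬ (∀ γ ∈ {γ : Γ | v (f - tr f γ) = (γ : WithTop Γ)}, γ < α) →
      ∃! β : Γ, β ∈ {γ : Γ | v (f - tr f γ) = (γ : WithTop Γ)} ∧ α ≤ β ∧ tr f α = tr f β) := by
  have hαle : ∀ δ : Γ, v (f - tr f α) = (δ : WithTop Γ) → α ≤ δ := by
    intro δ h
    have := t1 f α
    rw [h] at this
    exact_mod_cast this
  have claim : ∀ δ : Γ, v (f - tr f α) = (δ : WithTop Γ) → tr f α = tr f δ := by
    intro δ h
    rcases lt_or_eq_of_le (hαle δ h) with hlt | heq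
    · have h0 : tr (f - tr f α) δ = 0 := t2 _ _ (le_of_eq h.symm)
      have hdec : tr f δ = tr (f - tr f α) δ + tr (tr f α) δ := by
        have := t4a (f - tr f α) (tr f α) δ
        simpa using this
      rw [hdec, h0, t3 f α δ hlt, zero_add]
    · rw [heq]
  constructor
  · intro hall
    by_contra hne
    have hne' : f - tr f α ≠ 0 := sub_ne_zero.mpr (fun h => hne h.symm)
    have hfin : v (f - tr f α) ≠ ⊤ := fun h => hne' ((hv0 _).mp h)
    obtain ⟨δ, hδ'⟩ := WithTop.ne_top_iff_exists.mp hfin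
    have hδ : v (f - tr f α) = (δ : WithTop Γ) := hδ'.symm
    have htr := claim δ hδ
    have hsp : δ ∈ {γ : Γ | v (f - tr f γ) = (γ : WithTop Γ)} := by
      show v (f - tr f δ) = (δ : WithTop Γ)
      rw [← htr]; exact hδ
    exact absurd (hαle δ hδ) (not_le.mpr (hall δ hsp))
  · intro hnall
    push_neg at hnall
    obtain ⟨γ, hγsp, hγge⟩ := hnall
    have hfin : v (f - tr f α) ≠ ⊤ := by
      intro htop
      have hf : tr f α = f := (sub_eq_zero.mp ((hv0 _).mp htop)).symm
      rcases lt_or_eq_of_le hγge with hlt | heq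
      · have ht := t3 f α γ hlt
        rw [hf] at ht
        have : v (f - tr f γ) = (γ : WithTop Γ) := hγsp
        rw [ht] at this
        rw [hf, sub_self] at htop  -- htop unchanged? no
        rw [sub_self] at this
        rw [(hv0 0).mpr rfl] at this
        exact (WithTop.coe_ne_top this.symm)
      · have : v (f - tr f γ) = (γ : WithTop Γ) := hγsp
        rw [← heq] at this
        rw [htop] at this
        exact (WithTop.coe_ne_top this.symm)
    obtain ⟨δ, hδ'⟩ := WithTop.ne_top_iff_exists.mp hfin
    have hδ : v (f - tr f α) = (δ : WithTop Γ) := hδ'.symm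
    have htr := claim δ hδ
    have hsp : v (f - tr f δ) = (δ : WithTop Γ) := by rw [← htr]; exact hδ
    refine ⟨δ, ⟨hsp, hαle δ hδ, htr⟩, ?_⟩
    rintro β ⟨hβsp, hβge, hβtr⟩
    have : v (f - tr f α) = (β : WithTop Γ) := by rw [hβtr]; exact hβsp
    have := hδ ▸ this
    exact (WithTop.coe_injective this.symm)
end

section
/- If sp(f) = {γ₁, …, γₙ} with γ₁ < ⋯ < γₙ, then there exist f₁, …, fₙ with each sp(fᵢ) a singleton, v(fᵢ) = γᵢ, and f = f₁ + ⋯ + fₙ. -/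
theorem stmt_8
    (C : Type*) [Field C] (E : Type*) [AddCommGroup E] [Module C E]
    (Γ : Type*) [LinearOrder Γ]
    (v : E → WithTop Γ)
    (hv0 : ∀ f : E, v f = ⊤ ↔ f = 0)
    (hvc : ∀ (c : C) (f : E), c ≠ 0 → v (c • f) = v f)
    (hva : ∀ f g : E, min (v f) (v g) ≤ v (f + g))
    (tr : E → Γ → E)
    (t1 : ∀ (f : E) (α : Γ), (α : WithTop Γ) ≤ v (f - tr f α))
    (t2 : ∀ (f : E) (α : Γ), (α : WithTop Γ) ≤ v f → tr f α = 0)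
    (t3 : ∀ (f : E) (α β : Γ), α < β → tr (tr f α) β = tr f α)
    (t4a : ∀ (f g : E) (α : Γ), tr (f + g) α = tr f α + tr g α)
    (t4s : ∀ (c : C) (f : E) (α : Γ), tr (c • f) α = c • tr f α)
    (f : E) (n : ℕ) (γs : Fin n → Γ) (hmono : StrictMono γs)
    (hsp : {γ : Γ | v (f - tr f γ) = (γ : WithTop Γ)} = Set.range γs) :
    ∃ fs : Fin n → E,
      (∀ i, (∃ δ : Γ, {γ : Γ | v (fs i - tr (fs i) γ) = (γ : WithTop Γ)} = {δ}) ∧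
        v (fs i) = (γs i : WithTop Γ)) ∧
      f = ∑ i, fs i := by
  classical
  have hiff : ∀ δ : Γ, v (f - tr f δ) = (δ : WithTop Γ) ↔ δ ∈ Set.range γs := by
    intro δ
    have := Set.ext_iff.mp hsp δ
    simpa [Set.mem_setOf_eq] using this
  have hneg : ∀ x : E, v (-x) = v x := by
    intro x
    simpa using hvc (-1 : C) x (by norm_num)
  have hsub : ∀ x y : E, min (v x) (v y) ≤ v (x - y) := by
    intro x y
    have h := hva x (-y)
    rw [hneg y] at h
    simpa [sub_eq_add_neg] using h
  have htrneg : ∀ (y : E) (a : Γ), tr (-y) a = -(tr y a) := by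
    intro y a
    simpa using t4s (-1 : C) y a
  have hsp_ge : ∀ (g : E) (δ : Γ), v (g - tr g δ) = (δ : WithTop Γ) →
      v g ≤ (δ : WithTop Γ) := by
    intro g δ h
    by_contra hlt
    push_neg at hlt
    rw [t2 g δ hlt.le, sub_zero] at h
    exact absurd h (ne_of_gt hlt)
  have hmem : ∀ (g : E) (δ : Γ), v g = (δ : WithTop Γ) →
      v (g - tr g δ) = (δ : WithTop Γ) := by
    intro g δ h
    rw [t2 g δ h.ge, sub_zero, h]
  have htrtr : ∀ (g : E) (β δ : Γ), (δ : WithTop Γ) ≤ v (g - tr g β) →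
      tr (tr g β) δ = tr g δ := by
    intro g β δ h
    have h0 : tr (g - tr g β) δ = 0 := t2 _ _ h
    have h1 : tr (g - tr g β) δ = tr g δ - tr (tr g β) δ := by
      rw [sub_eq_add_neg, t4a, htrneg, ← sub_eq_add_neg]
    rw [h1] at h0
    exact (sub_eq_zero.mp h0).symm
  rcases Nat.eq_zero_or_pos n with hn | hn
  · subst hn
    refine ⟨fun _ => 0, fun i => i.elim0, ?_⟩
    have hf : f = 0 := by
      by_contra hf
      obtain ⟨γ, hγ⟩ := WithTop.ne_top_iff_exists.mp (fun h => hf ((hv0 f).mp h))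
      obtain ⟨i, -⟩ := (hiff γ).mp (hmem f γ hγ.symm)
      exact i.elim0
    simp [hf]
  · set T : ℕ → E := fun k => if h : k < n then tr f (γs ⟨k, h⟩) else f with hT
    have hTi : ∀ i : Fin n, T (i : ℕ) = tr f (γs i) := by
      intro i
      simp only [hT, dif_pos i.isLt]
    have hγ0 : (γs ⟨0, hn⟩ : WithTop Γ) ≤ v f := by
      have hf : f ≠ 0 := by
        intro h
        have hf0 : v (f - tr f (γs ⟨0, hn⟩)) = (γs ⟨0, hn⟩ : WithTop Γ) :=
          (hiff _).mpr ⟨⟨0, hn⟩, rfl⟩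
        rw [h, t2 0 _ (by rw [(hv0 0).mpr rfl]; exact le_top), sub_zero,
          (hv0 0).mpr rfl] at hf0
        exact WithTop.coe_ne_top hf0.symm
      obtain ⟨γ, hγ⟩ := WithTop.ne_top_iff_exists.mp (fun h => hf ((hv0 f).mp h))
      obtain ⟨j, hj⟩ := (hiff γ).mp (hmem f γ hγ.symm)
      rw [← hγ, ← hj]
      exact WithTop.coe_le_coe.mpr (hmono.monotone (by simp [Fin.le_def]))
    refine ⟨fun i => T ((i : ℕ) + 1) - T (i : ℕ), ?_, ?_⟩
    · intro i
      beta_reduce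
      have hvα : v (f - tr f (γs i)) = (γs i : WithTop Γ) := (hiff _).mpr ⟨i, rfl⟩
      by_cases hi : (i : ℕ) + 1 < n
      · -- middle case
        have hT1 : T ((i : ℕ) + 1) = tr f (γs ⟨(i : ℕ) + 1, hi⟩) := by
          simp only [hT, dif_pos hi]
        set α := γs i with hα
        set β := γs ⟨(i : ℕ) + 1, hi⟩ with hβ
        have hαβ : α < β := hmono (by simp [Fin.lt_def])
        have hvβ : v (f - tr f β) = (β : WithTop Γ) := (hiff _).mpr ⟨_, rfl⟩
        rw [hT1, hTi i]
        set g := tr f β - tr f α with hg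
        have hg_eq : g = (f - tr f α) - (f - tr f β) := by rw [hg]; abel
        have h1 : (α : WithTop Γ) ≤ v g := by
          rw [hg_eq]
          refine le_trans ?_ (hsub _ _)
          rw [hvα, hvβ]
          exact le_min le_rfl (WithTop.coe_le_coe.mpr hαβ.le)
        have h2 : v g = (α : WithTop Γ) := by
          by_contra hne
          have hlt : (α : WithTop Γ) < v g := lt_of_le_of_ne h1 (Ne.symm hne)
          have hcon : (α : WithTop Γ) < v (f - tr f α) := by
            have hrw : f - tr f α = g + (f - tr f β) := by rw [hg_eq]; abel
            rw [hrw]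
            calc (α : WithTop Γ) < min (v g) (v (f - tr f β)) := by
                  rw [hvβ]; exact lt_min hlt (WithTop.coe_lt_coe.mpr hαβ)
              _ ≤ _ := hva _ _
          rw [hvα] at hcon
          exact lt_irrefl _ hcon
        refine ⟨⟨α, ?_⟩, h2⟩
        ext δ
        simp only [Set.mem_setOf_eq, Set.mem_singleton_iff]
        constructor
        · intro hδ
          by_contra hne
          have hle : α ≤ δ := by
            have := hsp_ge g δ hδ
            rw [h2] at this
            exact WithTop.coe_le_coe.mp this
          have hlt : α < δ := lt_of_le_of_ne hle (fun h => hne h.symm)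
          have htrα : tr (tr f α) δ = tr f α := t3 f α δ hlt
          by_cases hδβ : δ ≤ β
          · have htrβ : tr (tr f β) δ = tr f δ :=
              htrtr f β δ (by rw [hvβ]; exact WithTop.coe_le_coe.mpr hδβ)
            have htg : tr g δ = tr f δ - tr f α := by
              rw [hg, sub_eq_add_neg (tr f β), t4a, htrneg, htrβ, htrα,
                ← sub_eq_add_neg]
            have hrw : g - tr g δ = (f - tr f δ) - (f - tr f β) := by
              rw [htg, hg]; abel
            rcases lt_or_eq_of_le hδβ with hδβ' | hδβ'
            · have hδne : v (f - tr f δ) ≠ (δ : WithTop Γ) := by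
                intro h
                obtain ⟨k, hk⟩ := (hiff δ).mp h
                have h1' : i < k := hmono.lt_iff_lt.mp (by rw [hk]; exact hlt)
                have h2' : k < (⟨(i : ℕ) + 1, hi⟩ : Fin n) :=
                  hmono.lt_iff_lt.mp (by rw [hk]; exact hδβ')
                have : (i : ℕ) < (k : ℕ) := h1'
                have : (k : ℕ) < (i : ℕ) + 1 := h2'
                omega
              have hδgt : (δ : WithTop Γ) < v (f - tr f δ) :=
                lt_of_le_of_ne (t1 f δ) (Ne.symm hδne)
              have : (δ : WithTop Γ) < v (g - tr g δ) := by
                rw [hrw]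
                calc (δ : WithTop Γ) < min (v (f - tr f δ)) (v (f - tr f β)) := by
                      rw [hvβ]; exact lt_min hδgt (WithTop.coe_lt_coe.mpr hδβ')
                  _ ≤ _ := hsub _ _
              rw [hδ] at this
              exact lt_irrefl _ this
            · subst hδβ'
              rw [hrw, sub_self] at hδ
              rw [(hv0 0).mpr rfl] at hδ
              exact WithTop.coe_ne_top hδ.symm
          · push_neg at hδβ
            have htrβ : tr (tr f β) δ = tr f β := t3 f β δ hδβ
            have htg : tr g δ = g := by
              rw [hg, sub_eq_add_neg (tr f β), t4a, htrneg, htrβ, htrα,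
                ← sub_eq_add_neg]
            rw [htg, sub_self, (hv0 0).mpr rfl] at hδ
            exact WithTop.coe_ne_top hδ.symm
        · intro hδ
          rw [hδ]
          exact hmem g α h2
      · -- last case
        have hieq : (i : ℕ) + 1 = n := by omega
        have hT1 : T ((i : ℕ) + 1) = f := by
          simp only [hT, hieq, dif_neg (lt_irrefl n)]
        rw [hT1, hTi i]
        set α := γs i with hα
        set h := f - tr f α with hh
        refine ⟨⟨α, ?_⟩, hvα⟩
        ext δ
        simp only [Set.mem_setOf_eq, Set.mem_singleton_iff]
        constructor
        · intro hδ
          by_contra hne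
          have hle : α ≤ δ := by
            have := hsp_ge h δ hδ
            rw [hvα] at this
            exact WithTop.coe_le_coe.mp this
          have hlt : α < δ := lt_of_le_of_ne hle (fun h' => hne h'.symm)
          have htrα : tr (tr f α) δ = tr f α := t3 f α δ hlt
          have htg : tr h δ = tr f δ - tr f α := by
            rw [hh, sub_eq_add_neg f, t4a, htrneg, htrα, ← sub_eq_add_neg]
          have hrw : h - tr h δ = f - tr f δ := by rw [htg, hh]; abel
          rw [hrw] at hδ
          obtain ⟨k, hk⟩ := (hiff δ).mp hδ
          have h1' : i < k := hmono.lt_iff_lt.mp (by rw [hk]; exact hlt)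
          have : (i : ℕ) < (k : ℕ) := h1'
          have := k.isLt
          omega
        · intro hδ
          rw [hδ]
          exact hmem h α hvα
    · -- telescoping sum
      have hsum : ∑ i : Fin n, (T ((i : ℕ) + 1) - T (i : ℕ)) = T n - T 0 := by
        rw [Fin.sum_univ_eq_sum_range (fun k => T (k + 1) - T k) n]
        exact Finset.sum_range_sub T n
      rw [hsum]
      have hTn : T n = f := by simp only [hT, dif_neg (lt_irrefl n)]
      have hT0 : T 0 = 0 := by
        simp only [hT, dif_pos hn]
        exact t2 f _ hγ0
      rw [hTn, hT0, sub_zero]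
end

section
/- sp(f) is finite if and only if f is a finite sum of elements of P (including the empty sum 0), where P = {g : sp(g) is a singleton}. -/
/-!
Truncation at `γ` splits `f` as `tr f γ + (f - tr f γ)`, and the spectra of the two pieces are
exactly the parts of `sp f` below `γ` and at or above `γ`: this only needs `sp (f + g) ⊆ sp f ∪ sp g`
together with `sp (tr f γ) < γ ≤ sp (f - tr f γ)`. Splitting a finite spectrum at its largest point
therefore peels off an element of `P`, and induction on the spectrum writes `f` as a finite sum of
elements of `P`. Conversely, `sp` of a finite sum lies in the union of the spectra of the summands.
-/

theorem AddSubmonoid.mem_closure_iff_exists_fin_sum {M : Type*} [AddCommMonoid M] {s : Set M}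
    {x : M} : x ∈ closure s ↔ ∃ (n : ℕ) (fs : Fin n → M), (∀ i, fs i ∈ s) ∧ x = ∑ i, fs i := by
  constructor
  · intro hx
    obtain ⟨l, hls, rfl⟩ := exists_list_of_mem_closure hx
    exact ⟨l.length, fun i => l[i.1], fun i => hls _ (List.getElem_mem _), by simp⟩
  · rintro ⟨n, fs, hfs, rfl⟩
    exact AddSubmonoid.sum_mem _ fun i _ => subset_closure (hfs i)

structure IsTruncatedValuation {E Γ : Type*} [AddCommGroup E] [LinearOrder Γ]
    (v : E → WithTop Γ) (tr : E → Γ → E) : Prop where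
  val_eq_top_iff : ∀ f, v f = ⊤ ↔ f = 0
  min_le_val_add : ∀ f g, min (v f) (v g) ≤ v (f + g)
  le_val_sub_trunc : ∀ f (α : Γ), (α : WithTop Γ) ≤ v (f - tr f α)
  trunc_eq_zero_of_le_val : ∀ f (α : Γ), (α : WithTop Γ) ≤ v f → tr f α = 0
  trunc_trunc_of_lt : ∀ f α β, α < β → tr (tr f α) β = tr f α
  trunc_add : ∀ f g α, tr (f + g) α = tr f α + tr g α

def truncSpectrum {E Γ : Type*} [AddCommGroup E] (v : E → WithTop Γ) (tr : E → Γ → E) (f : E) :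
    Set Γ :=
  {γ | v (f - tr f γ) = γ}

namespace IsTruncatedValuation

variable {E Γ : Type*} [AddCommGroup E] [LinearOrder Γ] {v : E → WithTop Γ} {tr : E → Γ → E}
  {f : E} {α β γ : Γ}

def truncHom (h : IsTruncatedValuation v tr) (α : Γ) : E →+ E :=
  AddMonoidHom.mk' (tr · α) fun f g => h.trunc_add f g α

theorem trunc_zero (h : IsTruncatedValuation v tr) (α : Γ) : tr 0 α = 0 :=
  map_zero (h.truncHom α)

theorem trunc_neg (h : IsTruncatedValuation v tr) (f : E) (α : Γ) : tr (-f) α = -tr f α :=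
  map_neg (h.truncHom α) f

theorem trunc_sub (h : IsTruncatedValuation v tr) (f g : E) (α : Γ) :
    tr (f - g) α = tr f α - tr g α :=
  map_sub (h.truncHom α) f g

theorem val_zero (h : IsTruncatedValuation v tr) : v 0 = ⊤ :=
  (h.val_eq_top_iff 0).2 rfl

theorem le_val_iff_trunc_eq_zero (h : IsTruncatedValuation v tr) :
    (α : WithTop Γ) ≤ v f ↔ tr f α = 0 := by
  refine ⟨h.trunc_eq_zero_of_le_val f α, fun hf => ?_⟩
  simpa [hf] using h.le_val_sub_trunc f α

theorem val_le_val_neg (h : IsTruncatedValuation v tr) (f : E) : v f ≤ v (-f) := by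
  by_cases hf : f = 0
  · simp [hf]
  obtain ⟨γ, hγ⟩ := WithTop.ne_top_iff_exists.1 (mt (h.val_eq_top_iff f).1 hf)
  rw [← hγ, h.le_val_iff_trunc_eq_zero, h.trunc_neg, neg_eq_zero, ← h.le_val_iff_trunc_eq_zero, ← hγ]

theorem val_neg (h : IsTruncatedValuation v tr) (f : E) : v (-f) = v f :=
  le_antisymm (by simpa using h.val_le_val_neg (-f)) (h.val_le_val_neg f)

theorem truncSpectrum_neg (h : IsTruncatedValuation v tr) (f : E) :
    truncSpectrum v tr (-f) = truncSpectrum v tr f := by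
  ext γ
  simp only [truncSpectrum, Set.mem_ofPred_eq, h.trunc_neg, ← h.val_neg (f - tr f γ), neg_sub,
    sub_neg_eq_add, neg_add_eq_sub]

theorem truncSpectrum_add_subset (h : IsTruncatedValuation v tr) (f g : E) :
    truncSpectrum v tr (f + g) ⊆ truncSpectrum v tr f ∪ truncSpectrum v tr g := by
  intro γ hγ
  by_contra hfg
  simp only [truncSpectrum, Set.mem_union, Set.mem_ofPred_eq, not_or] at hγ hfg
  have hf := lt_of_le_of_ne (h.le_val_sub_trunc f γ) (Ne.symm hfg.1)
  have hg := lt_of_le_of_ne (h.le_val_sub_trunc g γ) (Ne.symm hfg.2)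
  have hsum := h.min_le_val_add (f - tr f γ) (g - tr g γ)
  rw [← add_sub_add_comm, ← h.trunc_add, hγ] at hsum
  exact hsum.not_gt (lt_min hf hg)

theorem truncSpectrum_sub_subset (h : IsTruncatedValuation v tr) (f g : E) :
    truncSpectrum v tr (f - g) ⊆ truncSpectrum v tr f ∪ truncSpectrum v tr g := by
  simpa only [sub_eq_add_neg, h.truncSpectrum_neg] using h.truncSpectrum_add_subset f (-g)

theorem mem_truncSpectrum_of_val_eq (h : IsTruncatedValuation v tr) (hf : v f = γ) :
    γ ∈ truncSpectrum v tr f := by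
  rw [truncSpectrum, Set.mem_ofPred_eq, h.trunc_eq_zero_of_le_val f γ hf.ge, sub_zero, hf]

theorem truncSpectrum_eq_empty_iff (h : IsTruncatedValuation v tr) :
    truncSpectrum v tr f = ∅ ↔ f = 0 := by
  constructor
  · intro hf
    by_contra hf0
    obtain ⟨γ, hγ⟩ := WithTop.ne_top_iff_exists.1 (mt (h.val_eq_top_iff f).1 hf0)
    simpa [hf] using h.mem_truncSpectrum_of_val_eq hγ.symm
  · rintro rfl
    ext γ
    simp [truncSpectrum, h.trunc_zero, h.val_zero]

theorem val_le_of_mem_truncSpectrum (h : IsTruncatedValuation v tr)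
    (hγ : γ ∈ truncSpectrum v tr f) : v f ≤ γ := by
  by_contra hlt
  rw [not_le] at hlt
  rw [truncSpectrum, Set.mem_ofPred_eq, h.trunc_eq_zero_of_le_val f γ hlt.le, sub_zero] at hγ
  exact hlt.ne' hγ

theorem trunc_trunc_of_le (h : IsTruncatedValuation v tr) (f : E) (hαβ : α ≤ β) :
    tr (tr f α) β = tr f α := by
  obtain rfl | hlt := hαβ.eq_or_lt
  · have hrest : tr (f - tr f α) α = 0 := h.trunc_eq_zero_of_le_val _ α (h.le_val_sub_trunc f α)
    rw [h.trunc_sub, sub_eq_zero] at hrest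
    exact hrest.symm
  · exact h.trunc_trunc_of_lt f α β hlt

theorem truncSpectrum_trunc_subset_Iio (h : IsTruncatedValuation v tr) (f : E) (α : Γ) :
    truncSpectrum v tr (tr f α) ⊆ Set.Iio α := by
  intro β hβ
  by_contra hαβ
  rw [Set.mem_Iio, not_lt] at hαβ
  simp [truncSpectrum, h.trunc_trunc_of_le f hαβ, h.val_zero] at hβ

theorem truncSpectrum_sub_trunc_subset_Ici (h : IsTruncatedValuation v tr) (f : E) (α : Γ) :
    truncSpectrum v tr (f - tr f α) ⊆ Set.Ici α := fun _ hβ =>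
  WithTop.coe_le_coe.1 ((h.le_val_sub_trunc f α).trans (h.val_le_of_mem_truncSpectrum hβ))

theorem truncSpectrum_trunc (h : IsTruncatedValuation v tr) (f : E) (α : Γ) :
    truncSpectrum v tr (tr f α) = truncSpectrum v tr f ∩ Set.Iio α := by
  have hlow := h.truncSpectrum_trunc_subset_Iio f α
  have hhigh := h.truncSpectrum_sub_trunc_subset_Ici f α
  have hsplit := h.truncSpectrum_add_subset (tr f α) (f - tr f α)
  have hlow' := h.truncSpectrum_sub_subset f (f - tr f α)
  rw [add_sub_cancel] at hsplit
  rw [sub_sub_cancel] at hlow'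
  ext β
  constructor
  · intro hβ
    have hβα : β < α := hlow hβ
    refine ⟨(hlow' hβ).resolve_right fun hβ' => ?_, hβα⟩
    exact (hhigh hβ').not_gt hβα
  · rintro ⟨hβ, hβα⟩
    exact (hsplit hβ).resolve_right fun hβ' => (hhigh hβ').not_gt hβα

theorem truncSpectrum_sub_trunc (h : IsTruncatedValuation v tr) (f : E) (α : Γ) :
    truncSpectrum v tr (f - tr f α) = truncSpectrum v tr f ∩ Set.Ici α := by
  have hlow := h.truncSpectrum_trunc_subset_Iio f α
  have hhigh := h.truncSpectrum_sub_trunc_subset_Ici f α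
  have hsplit := h.truncSpectrum_add_subset (tr f α) (f - tr f α)
  have hhigh' := h.truncSpectrum_sub_subset f (tr f α)
  rw [add_sub_cancel] at hsplit
  ext β
  constructor
  · intro hβ
    have hαβ : α ≤ β := hhigh hβ
    refine ⟨(hhigh' hβ).resolve_right fun hβ' => ?_, hαβ⟩
    exact (hlow hβ').not_ge hαβ
  · rintro ⟨hβ, hαβ⟩
    exact (hsplit hβ).resolve_left fun hβ' => (hlow hβ').not_ge hαβ

def finiteSpectrum (h : IsTruncatedValuation v tr) : AddSubmonoid E where
  carrier := {f | (truncSpectrum v tr f).Finite}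
  zero_mem' := by simp [h.truncSpectrum_eq_empty_iff.2 rfl]
  add_mem' {f g} hf hg := (hf.union hg).subset (h.truncSpectrum_add_subset f g)

theorem mem_closure_of_truncSpectrum_subset (h : IsTruncatedValuation v tr) [DecidableEq Γ]
    (s : Finset Γ) : ∀ f, truncSpectrum v tr f ⊆ s →
      f ∈ AddSubmonoid.closure {g | ∃ δ, truncSpectrum v tr g = {δ}} := by
  induction s using Finset.induction_on_max with
  | empty =>
    intro f hf
    rw [Finset.coe_empty, Set.subset_empty_iff, h.truncSpectrum_eq_empty_iff] at hf
    exact hf ▸ zero_mem _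
  | insert α s hsα ih =>
    intro f hf
    rw [← add_sub_cancel (tr f α) f]
    refine add_mem (ih _ ?_) ?_
    · rw [h.truncSpectrum_trunc]
      rintro β ⟨hβ, hβα⟩
      simpa [hβα.ne] using hf hβ
    · have hhead : truncSpectrum v tr (f - tr f α) ⊆ {α} := by
        rw [h.truncSpectrum_sub_trunc]
        rintro β ⟨hβ, hαβ⟩
        have := hf hβ
        simp only [Finset.coe_insert, Set.mem_insert_iff, Finset.mem_coe] at this
        exact this.resolve_right fun hβs => (hsα β hβs).not_ge hαβ
      rcases Set.subset_singleton_iff_eq.1 hhead with hempty | hsingle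
      · rw [h.truncSpectrum_eq_empty_iff.1 hempty]
        exact zero_mem _
      · exact AddSubmonoid.subset_closure ⟨α, hsingle⟩

theorem truncSpectrum_finite_iff_mem_closure (h : IsTruncatedValuation v tr) :
    (truncSpectrum v tr f).Finite ↔
      f ∈ AddSubmonoid.closure {g | ∃ δ, truncSpectrum v tr g = {δ}} := by
  classical
  constructor
  · intro hf
    exact h.mem_closure_of_truncSpectrum_subset hf.toFinset f (by simp)
  · refine fun hf => AddSubmonoid.closure_le (S := h.finiteSpectrum).2 ?_ hf
    rintro g ⟨δ, hδ⟩
    change (truncSpectrum v tr g).Finite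
    exact hδ ▸ Set.finite_singleton δ

end IsTruncatedValuation

theorem stmt_9_general
    (E : Type*) [AddCommGroup E]
    (Γ : Type*) [LinearOrder Γ]
    (v : E → WithTop Γ)
    (hv0 : ∀ f : E, v f = ⊤ ↔ f = 0)
    (hva : ∀ f g : E, min (v f) (v g) ≤ v (f + g))
    (tr : E → Γ → E)
    (t1 : ∀ (f : E) (α : Γ), (α : WithTop Γ) ≤ v (f - tr f α))
    (t2 : ∀ (f : E) (α : Γ), (α : WithTop Γ) ≤ v f → tr f α = 0)
    (t3 : ∀ (f : E) (α β : Γ), α < β → tr (tr f α) β = tr f α)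
    (t4a : ∀ (f g : E) (α : Γ), tr (f + g) α = tr f α + tr g α)
    (f : E) :
    ({γ : Γ | v (f - tr f γ) = (γ : WithTop Γ)}).Finite ↔
      ∃ (n : ℕ) (fs : Fin n → E),
        (∀ i, ∃ δ : Γ, {γ : Γ | v (fs i - tr (fs i) γ) = (γ : WithTop Γ)} = {δ}) ∧
        f = ∑ i, fs i := by
  have h : IsTruncatedValuation v tr := ⟨hv0, hva, t1, t2, t3, t4a⟩
  exact h.truncSpectrum_finite_iff_mem_closure.trans AddSubmonoid.mem_closure_iff_exists_fin_sum

theorem stmt_9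
    (C : Type*) [Field C] (E : Type*) [AddCommGroup E] [Module C E]
    (Γ : Type*) [LinearOrder Γ]
    (v : E → WithTop Γ)
    (hv0 : ∀ f : E, v f = ⊤ ↔ f = 0)
    (hvc : ∀ (c : C) (f : E), c ≠ 0 → v (c • f) = v f)
    (hva : ∀ f g : E, min (v f) (v g) ≤ v (f + g))
    (tr : E → Γ → E)
    (t1 : ∀ (f : E) (α : Γ), (α : WithTop Γ) ≤ v (f - tr f α))
    (t2 : ∀ (f : E) (α : Γ), (α : WithTop Γ) ≤ v f → tr f α = 0)
    (t3 : ∀ (f : E) (α β : Γ), α < β → tr (tr f α) β = tr f α)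
    (t4a : ∀ (f g : E) (α : Γ), tr (f + g) α = tr f α + tr g α)
    (t4s : ∀ (c : C) (f : E) (α : Γ), tr (c • f) α = c • tr f α)
    (f : E) :
    ({γ : Γ | v (f - tr f γ) = (γ : WithTop Γ)}).Finite ↔
      ∃ (n : ℕ) (fs : Fin n → E),
        (∀ i, ∃ δ : Γ, {γ : Γ | v (fs i - tr (fs i) γ) = (γ : WithTop Γ)} = {δ}) ∧
        f = ∑ i, fs i :=
  stmt_9_general E Γ v hv0 hva tr t1 t2 t3 t4a f
end

section
/- If f, g ∈ P ∪ {0} and v(f) = v(g), then f + g ∈ P ∪ {0}. -/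
theorem stmt_10
    (C : Type*) [Field C] (E : Type*) [AddCommGroup E] [Module C E]
    (Γ : Type*) [LinearOrder Γ]
    (v : E → WithTop Γ)
    (hv0 : ∀ f : E, v f = ⊤ ↔ f = 0)
    (hvc : ∀ (c : C) (f : E), c ≠ 0 → v (c • f) = v f)
    (hva : ∀ f g : E, min (v f) (v g) ≤ v (f + g))
    (tr : E → Γ → E)
    (t1 : ∀ (f : E) (α : Γ), (α : WithTop Γ) ≤ v (f - tr f α))
    (t2 : ∀ (f : E) (α : Γ), (α : WithTop Γ) ≤ v f → tr f α = 0)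
    (t3 : ∀ (f : E) (α β : Γ), α < β → tr (tr f α) β = tr f α)
    (t4a : ∀ (f g : E) (α : Γ), tr (f + g) α = tr f α + tr g α)
    (t4s : ∀ (c : C) (f : E) (α : Γ), tr (c • f) α = c • tr f α)
    (f g : E)
    (hf : f = 0 ∨ ∃ δ : Γ, {γ : Γ | v (f - tr f γ) = (γ : WithTop Γ)} = {δ})
    (hg : g = 0 ∨ ∃ δ : Γ, {γ : Γ | v (g - tr g γ) = (γ : WithTop Γ)} = {δ})
    (hfg : v f = v g) :
    f + g = 0 ∨ ∃ δ : Γ, {γ : Γ | v ((f + g) - tr (f + g) γ) = (γ : WithTop Γ)} = {δ} := by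
  rcases hf with hf0 | ⟨δ₁, hf1⟩
  · subst hf0
    have hg0 : g = 0 := (hv0 g).1 (by rw [← hfg]; exact (hv0 0).2 rfl)
    subst hg0; left; simp
  rcases hg with hg0 | ⟨δ₂, hg1⟩
  · subst hg0
    have hf0 : f = 0 := (hv0 f).1 (by rw [hfg]; exact (hv0 0).2 rfl)
    subst hf0; left; simp
  have hf0 : f ≠ 0 := by
    intro h; subst h
    have hmem : δ₁ ∈ {γ : Γ | v ((0 : E) - tr 0 γ) = (γ : WithTop Γ)} := by
      rw [hf1]; rfl
    have ht : tr (0 : E) δ₁ = 0 := t2 0 δ₁ (by rw [(hv0 0).2 rfl]; exact le_top)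
    simp only [Set.mem_setOf_eq, ht, sub_zero, (hv0 (0 : E)).2 rfl] at hmem
    exact (WithTop.coe_ne_top hmem.symm)
  have hg0 : g ≠ 0 := fun h => hf0 ((hv0 f).1 (by rw [hfg, h, (hv0 0).2 rfl]))
  obtain ⟨α, hα⟩ := WithTop.ne_top_iff_exists.1 (fun h => hf0 ((hv0 f).1 h))
  -- hα : ↑α = v f
  have e1 : α = δ₁ := by
    have hmf : v (f - tr f α) = (α : WithTop Γ) := by
      rw [t2 f α hα.le, sub_zero]; exact hα.symm
    have : α ∈ {γ : Γ | v (f - tr f γ) = (γ : WithTop Γ)} := hmf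
    rwa [hf1] at this
  have e2 : α = δ₂ := by
    have hmg : v (g - tr g α) = (α : WithTop Γ) := by
      rw [t2 g α (hα.trans hfg).le, sub_zero]; exact (hα.trans hfg).symm
    have : α ∈ {γ : Γ | v (g - tr g γ) = (γ : WithTop Γ)} := hmg
    rwa [hg1] at this
  have hδ : δ₂ = δ₁ := e2.symm.trans e1
  by_cases hfg0 : f + g = 0
  · left; exact hfg0
  right; refine ⟨δ₁, ?_⟩
  have key : ∀ γ : Γ, v (f + g - tr (f + g) γ) = (γ : WithTop Γ) → γ = δ₁ := by
    intro γ hγ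
    by_contra hne
    have hfγ : v (f - tr f γ) ≠ (γ : WithTop Γ) := by
      intro h
      have : γ ∈ {γ' : Γ | v (f - tr f γ') = (γ' : WithTop Γ)} := h
      rw [hf1] at this
      exact hne this
    have hgγ : v (g - tr g γ) ≠ (γ : WithTop Γ) := by
      intro h
      have : γ ∈ {γ' : Γ | v (g - tr g γ') = (γ' : WithTop Γ)} := h
      rw [hg1] at this
      exact hne (this.trans hδ)
    have h1 : (γ : WithTop Γ) < v (f - tr f γ) :=
      lt_of_le_of_ne (t1 f γ) (Ne.symm hfγ)
    have h2 : (γ : WithTop Γ) < v (g - tr g γ) :=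
      lt_of_le_of_ne (t1 g γ) (Ne.symm hgγ)
    have hlt : (γ : WithTop Γ) < v ((f - tr f γ) + (g - tr g γ)) :=
      lt_of_lt_of_le (lt_min h1 h2) (hva _ _)
    have heq : (f - tr f γ) + (g - tr g γ) = f + g - tr (f + g) γ := by
      rw [t4a]; abel
    rw [heq, hγ] at hlt
    exact lt_irrefl _ hlt
  ext γ
  simp only [Set.mem_setOf_eq, Set.mem_singleton_iff]
  constructor
  · exact key γ
  · rintro rfl
    obtain ⟨β, hβ⟩ := WithTop.ne_top_iff_exists.1 (fun h => hfg0 ((hv0 _).1 h))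
    have hmem : v (f + g - tr (f + g) β) = (β : WithTop Γ) := by
      rw [t2 _ β hβ.le, sub_zero]; exact hβ.symm
    have hβδ := key β hmem
    rwa [hβδ] at hmem
end

section
/- If E is a Hahn space and f, g ∈ P with v(f) = v(g), then f = c·g for some c ∈ C^×. -/
theorem stmt_11
    (C : Type*) [Field C] (E : Type*) [AddCommGroup E] [Module C E]
    (Γ : Type*) [LinearOrder Γ]
    (v : E → WithTop Γ)
    (hv0 : ∀ f : E, v f = ⊤ ↔ f = 0)
    (hvc : ∀ (c : C) (f : E), c ≠ 0 → v (c • f) = v f)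
    (hva : ∀ f g : E, min (v f) (v g) ≤ v (f + g))
    (tr : E → Γ → E)
    (t1 : ∀ (f : E) (α : Γ), (α : WithTop Γ) ≤ v (f - tr f α))
    (t2 : ∀ (f : E) (α : Γ), (α : WithTop Γ) ≤ v f → tr f α = 0)
    (t3 : ∀ (f : E) (α β : Γ), α < β → tr (tr f α) β = tr f α)
    (t4a : ∀ (f g : E) (α : Γ), tr (f + g) α = tr f α + tr g α)
    (t4s : ∀ (c : C) (f : E) (α : Γ), tr (c • f) α = c • tr f α)
    (hahn : ∀ f g : E, f ≠ 0 → g ≠ 0 → v f = v g → ∃ c : C, c ≠ 0 ∧ v f < v (f - c • g))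
    (f g : E)
    (hf : ∃ δ : Γ, {γ : Γ | v (f - tr f γ) = (γ : WithTop Γ)} = {δ})
    (hg : ∃ δ : Γ, {γ : Γ | v (g - tr g γ) = (γ : WithTop Γ)} = {δ})
    (hfg : v f = v g) :
    ∃ c : C, c ≠ 0 ∧ f = c • g := by
  by_cases hf0 : f = 0
  · have hg0 : g = 0 := by
      apply (hv0 g).mp
      rw [← hfg, hf0, (hv0 0).mpr rfl]
    exact ⟨1, one_ne_zero, by simp [hf0, hg0]⟩
  have hg0 : g ≠ 0 := by
    intro h
    apply hf0
    apply (hv0 f).mp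
    rw [hfg, h, (hv0 0).mpr rfl]
  obtain ⟨c, hc0, hc⟩ := hahn f g hf0 hg0 hfg
  refine ⟨c, hc0, ?_⟩
  by_contra hne
  set h := f - c • g with hh
  have hh0 : h ≠ 0 := sub_ne_zero.mpr hne
  obtain ⟨α, hα⟩ : ∃ α : Γ, v f = ↑α := by
    cases hvf : v f with
    | top => exact absurd ((hv0 f).mp hvf) hf0
    | coe α => exact ⟨α, rfl⟩
  obtain ⟨β, hβ⟩ : ∃ β : Γ, v h = ↑β := by
    cases hvh : v h with
    | top => exact absurd ((hv0 h).mp hvh) hh0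
    | coe β => exact ⟨β, rfl⟩
  have hαβ : α < β := by
    have : (α : WithTop Γ) < (β : WithTop Γ) := by rw [← hα, ← hβ]; exact hc
    exact_mod_cast this
  have hvneg : ∀ x : E, v (-x) = v x := fun x => by
    have := hvc (-1) x (by norm_num)
    simpa using this
  have hsum : ∀ x y : E, v x < v y → v (x + y) = v x := by
    intro x y hxy
    refine le_antisymm ?_ ?_
    · by_contra hlt
      push_neg at hlt
      have hx : v x = v (x + y + -y) := by simp
      have := hva (x + y) (-y)
      rw [hvneg, ← hx] at this
      exact absurd (lt_min hlt hxy) (not_lt.mpr this)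
    · calc v x = min (v x) (v y) := (min_eq_left hxy.le).symm
        _ ≤ v (x + y) := hva x y
  -- α is in sp(f) and sp(g)
  obtain ⟨δf, hδf⟩ := hf
  obtain ⟨δg, hδg⟩ := hg
  have hαf : α ∈ {γ : Γ | v (f - tr f γ) = (γ : WithTop Γ)} := by
    have : tr f α = 0 := t2 f α (hα ▸ le_rfl)
    simp only [Set.mem_setOf_eq, this, sub_zero, hα]
  have hαg : α ∈ {γ : Γ | v (g - tr g γ) = (γ : WithTop Γ)} := by
    have hvg : v g = ↑α := hfg ▸ hα
    have : tr g α = 0 := t2 g α (hvg ▸ le_rfl)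
    simp only [Set.mem_setOf_eq, this, sub_zero, hvg]
  have hαδf : α = δf := by rw [hδf] at hαf; exact hαf
  have hαδg : α = δg := by rw [hδg] at hαg; exact hαg
  -- decomposition at β
  have hfeq : f = h + c • g := by rw [hh]; abel
  have htrh : tr h β = 0 := t2 h β (hβ ▸ le_rfl)
  have htrf : tr f β = c • tr g β := by
    rw [hfeq, t4a, t4s, htrh, zero_add]
  have hdecomp : f - tr f β = h + c • (g - tr g β) := by
    rw [htrf, hfeq, smul_sub]; abel
  by_cases hcase : (β : WithTop Γ) < v (g - tr g β)
  · have hβf : β ∈ {γ : Γ | v (f - tr f γ) = (γ : WithTop Γ)} := by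
      have hlt : v h < v (c • (g - tr g β)) := by
        rw [hvc c _ hc0, hβ]; exact hcase
      simp only [Set.mem_setOf_eq, hdecomp, hsum _ _ hlt, hβ]
    have : β = δf := by rw [hδf] at hβf; exact hβf
    exact absurd (hαδf.trans this.symm) hαβ.ne
  · have hβg : β ∈ {γ : Γ | v (g - tr g γ) = (γ : WithTop Γ)} :=
      le_antisymm (not_lt.mp hcase) (t1 g β)
    have : β = δg := by rw [hδg] at hβg; exact hβg
    exact absurd (hαδg.trans this.symm) hαβ.ne
end

section
/- Assume v : E → Γ ∪ {∞} is surjective, and suppose sp(f) is wellordered for every f ∈ E. Then for every α ∈ Γ there exists f ∈ P with v(f) = α, where P = {f : sp(f) is a singleton}. -/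
theorem stmt_12
    (C : Type*) [Field C] (E : Type*) [AddCommGroup E] [Module C E]
    (Γ : Type*) [LinearOrder Γ]
    (v : E → WithTop Γ)
    (hv0 : ∀ f : E, v f = ⊤ ↔ f = 0)
    (hvc : ∀ (c : C) (f : E), c ≠ 0 → v (c • f) = v f)
    (hva : ∀ f g : E, min (v f) (v g) ≤ v (f + g))
    (tr : E → Γ → E)
    (t1 : ∀ (f : E) (α : Γ), (α : WithTop Γ) ≤ v (f - tr f α))
    (t2 : ∀ (f : E) (α : Γ), (α : WithTop Γ) ≤ v f → tr f α = 0)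
    (t3 : ∀ (f : E) (α β : Γ), α < β → tr (tr f α) β = tr f α)
    (t4a : ∀ (f g : E) (α : Γ), tr (f + g) α = tr f α + tr g α)
    (t4s : ∀ (c : C) (f : E) (α : Γ), tr (c • f) α = c • tr f α)
    (hsurj : Function.Surjective v)
    (hwf : ∀ f : E, {γ : Γ | v (f - tr f γ) = (γ : WithTop Γ)}.IsWF)
    (α : Γ) :
    ∃ f : E, (∃ δ : Γ, {γ : Γ | v (f - tr f γ) = (γ : WithTop Γ)} = {δ}) ∧
      v f = (α : WithTop Γ) := by
  obtain ⟨g, hg⟩ := hsurj (α : WithTop Γ)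
  have hvneg : ∀ x : E, v (-x) = v x := fun x => by
    have := hvc (-1 : C) x (by simp)
    simpa using this
  have hvsub : ∀ x y : E, min (v x) (v y) ≤ v (x - y) := fun x y => by
    have h := hva x (-y)
    rw [hvneg y] at h
    simpa [sub_eq_add_neg] using h
  have spmem : ∀ (h : E) (δ : Γ), v h = (δ : WithTop Γ) →
      v (h - tr h δ) = (δ : WithTop Γ) := by
    intro h δ hh
    rw [t2 h δ (le_of_eq hh.symm), sub_zero, hh]
  have splb : ∀ (h : E) (δ γ : Γ), v h = (δ : WithTop Γ) →
      v (h - tr h γ) = (γ : WithTop Γ) → δ ≤ γ := by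
    intro h δ γ hh hγ
    by_contra hlt
    push_neg at hlt
    have h0 : tr h γ = 0 := t2 h γ (by rw [hh]; exact_mod_cast hlt.le)
    rw [h0, sub_zero, hh] at hγ
    have : δ = γ := by exact_mod_cast hγ
    exact hlt.ne this.symm
  by_cases hT : ({γ : Γ | v (g - tr g γ) = (γ : WithTop Γ)} \ {α}).Nonempty
  · -- nontrivial spectrum: truncate at the second smallest point
    have hWF : ({γ : Γ | v (g - tr g γ) = (γ : WithTop Γ)} \ {α}).IsWF :=
      (hwf g).mono Set.diff_subset
    set β := hWF.min hT with hβdef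
    have hβ := hWF.min_mem hT
    have hβS : v (g - tr g β) = (β : WithTop Γ) := hβ.1
    have hβne : β ≠ α := hβ.2
    have hαβ : α < β := lt_of_le_of_ne (splb g α β hg hβS) (Ne.symm hβne)
    set f := tr g β with hf
    have hgf : v (g - f) = (β : WithTop Γ) := hβS
    have hvf : v f = (α : WithTop Γ) := by
      have h1 : (α : WithTop Γ) ≤ v f := by
        calc (α : WithTop Γ) = min (v g) (v (g - f)) := by
              rw [hg, hgf]
              exact (min_eq_left (by exact_mod_cast hαβ.le)).symm
          _ ≤ v (g - (g - f)) := hvsub g (g - f)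
          _ = v f := by rw [sub_sub_cancel]
      have h2 : v f ≤ (α : WithTop Γ) := by
        by_contra hc
        push_neg at hc
        have hmin : (α : WithTop Γ) < min (v f) (v (g - f)) :=
          lt_min hc (by rw [hgf]; exact_mod_cast hαβ)
        have h3 := hva f (g - f)
        rw [add_sub_cancel, hg] at h3
        exact absurd (hmin.trans_le h3) (lt_irrefl _)
      exact le_antisymm h2 h1
    refine ⟨f, ⟨α, ?_⟩, hvf⟩
    apply Set.eq_singleton_iff_unique_mem.mpr
    refine ⟨spmem f α hvf, ?_⟩
    intro γ hγ
    simp only [Set.mem_setOf_eq] at hγ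
    by_contra hne
    have hαγ : α < γ := lt_of_le_of_ne (splb f α γ hvf hγ) (Ne.symm hne)
    have hdecomp : ∀ δ : Γ, (δ : WithTop Γ) ≤ (β : WithTop Γ) → tr f δ = tr g δ := by
      intro δ hδ
      have h0 : tr (g - f) δ = 0 := t2 _ _ (by rw [hgf]; exact hδ)
      have heq : tr g δ = tr f δ + tr (g - f) δ := by
        rw [← t4a]; congr 1; abel
      rw [h0, add_zero] at heq
      exact heq.symm
    rcases lt_trichotomy γ β with hlt | heq | hgt
    · have htr : tr f γ = tr g γ := hdecomp γ (by exact_mod_cast hlt.le)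
      have hnotS : v (g - tr g γ) ≠ (γ : WithTop Γ) := by
        intro hmemv
        have hmem : γ ∈ ({γ : Γ | v (g - tr g γ) = (γ : WithTop Γ)} \ {α}) :=
          ⟨hmemv, by simpa using hne⟩
        exact absurd (hWF.min_le hT hmem) (not_le.mpr hlt)
      have hgt1 : (γ : WithTop Γ) < v (g - tr g γ) :=
        lt_of_le_of_ne (t1 g γ) (Ne.symm hnotS)
      have hgt2 : (γ : WithTop Γ) < v (g - f) := by
        rw [hgf]; exact_mod_cast hlt
      have heq2 : f - tr f γ = (g - tr g γ) - (g - f) := by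
        rw [htr]; abel
      have hcontra : (γ : WithTop Γ) < v (f - tr f γ) := by
        rw [heq2]
        exact lt_of_lt_of_le (lt_min hgt1 hgt2) (hvsub _ _)
      rw [hγ] at hcontra
      exact lt_irrefl _ hcontra
    · have htr : tr f γ = f := by
        rw [hdecomp γ (by rw [heq]), heq, ← hf]
      rw [htr, sub_self] at hγ
      rw [(hv0 0).mpr rfl] at hγ
      exact WithTop.coe_ne_top hγ.symm
    · have htr : tr f γ = f := t3 g β γ hgt
      rw [htr, sub_self] at hγ
      rw [(hv0 0).mpr rfl] at hγ
      exact WithTop.coe_ne_top hγ.symm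
  · -- sp(g) is already the singleton {α}
    refine ⟨g, ⟨α, ?_⟩, hg⟩
    apply Set.eq_singleton_iff_unique_mem.mpr
    refine ⟨spmem g α hg, ?_⟩
    intro γ hγ
    by_contra hne
    exact hT ⟨γ, hγ, by simpa using hne⟩
end

section
/- Uniqueness of the γ-term: if γ ∈ sp(f), g ∈ P ∪ {0}, and v(f - f|_γ - g) > γ, then g equals the γ-term fγ := d(f - f|_γ) (the leading term of f - f|_γ). -/
theorem stmt_14
    (C : Type*) [Field C] (E : Type*) [AddCommGroup E] [Module C E]
    (Γ : Type*) [LinearOrder Γ]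
    (v : E → WithTop Γ)
    (hv0 : ∀ f : E, v f = ⊤ ↔ f = 0)
    (hvc : ∀ (c : C) (f : E), c ≠ 0 → v (c • f) = v f)
    (hva : ∀ f g : E, min (v f) (v g) ≤ v (f + g))
    (tr : E → Γ → E)
    (t1 : ∀ (f : E) (α : Γ), (α : WithTop Γ) ≤ v (f - tr f α))
    (t2 : ∀ (f : E) (α : Γ), (α : WithTop Γ) ≤ v f → tr f α = 0)
    (t3 : ∀ (f : E) (α β : Γ), α < β → tr (tr f α) β = tr f α)
    (t4a : ∀ (f g : E) (α : Γ), tr (f + g) α = tr f α + tr g α)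
    (t4s : ∀ (c : C) (f : E) (α : Γ), tr (c • f) α = c • tr f α)
    (hwf : ∀ f : E, {γ : Γ | v (f - tr f γ) = (γ : WithTop Γ)}.IsWF)
    (f : E) (γ : Γ) (hγ : γ ∈ {γ : Γ | v (f - tr f γ) = (γ : WithTop Γ)}) (g : E)
    (hgP : g = 0 ∨ ∃ δ : Γ, {γ' : Γ | v (g - tr g γ') = (γ' : WithTop Γ)} = {δ})
    (hvg : (γ : WithTop Γ) < v (f - tr f γ - g)) :
    ((∃ δ : Γ, {γ' : Γ | v ((f - tr f γ) - tr (f - tr f γ) γ') = (γ' : WithTop Γ)} = {δ}) →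
        g = f - tr f γ) ∧
    (∀ β : Γ, γ < β →
      (∀ δ ∈ {γ' : Γ | v ((f - tr f γ) - tr (f - tr f γ) γ') = (γ' : WithTop Γ)},
        ¬ (γ < δ ∧ δ < β)) →
      g = tr (f - tr f γ) β) := by
  set h : E := f - tr f γ with hh
  have vh : v h = (γ : WithTop Γ) := hγ
  -- negation preserves valuation
  have vneg : ∀ b : E, v (-b) = v b := by
    intro b
    have hb : (-b) = (-1 : C) • b := by simp
    rw [hb, hvc _ _ (by norm_num : (-1 : C) ≠ 0)]
  -- ultrametric equality when valuations differ
  have ulem : ∀ a b : E, v a < v b → v (a + b) = v a := by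
    intro a b hab
    apply le_antisymm
    · have h1 := hva (a + b) (-b)
      rw [show a + b + -b = a by abel, vneg] at h1
      by_contra hlt
      push_neg at hlt
      exact absurd h1 (not_le.mpr (lt_min hlt hab))
    · calc v a = min (v a) (v b) := (min_eq_left hab.le).symm
        _ ≤ v (a + b) := hva a b
  -- g ≠ 0
  have hg0 : g ≠ 0 := by
    intro h0
    rw [h0, sub_zero, vh] at hvg
    exact lt_irrefl _ hvg
  -- v g = γ
  have vg : v g = (γ : WithTop Γ) := by
    have : v (h + -(h - g)) = v h := by
      apply ulem
      rw [vneg, vh]; exact hvg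
    rw [show h + -(h - g) = g by abel, vh] at this
    exact this
  -- sp g = {γ}
  have spg : {γ' : Γ | v (g - tr g γ') = (γ' : WithTop Γ)} = {γ} := by
    obtain ⟨δ, hδ⟩ := hgP.resolve_left hg0
    have hγg : γ ∈ {γ' : Γ | v (g - tr g γ') = (γ' : WithTop Γ)} := by
      have : tr g γ = 0 := t2 g γ (le_of_eq vg.symm)
      simp only [Set.mem_setOf_eq, this, sub_zero]
      exact vg
    rw [hδ] at hγg
    rw [hδ, hγg]
  -- beyond γ, truncations of g are good approximations
  have gblock : ∀ μ : Γ, γ < μ → (μ : WithTop Γ) < v (g - tr g μ) := by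
    intro μ hμ
    refine lt_of_le_of_ne (t1 g μ) ?_
    intro heq
    have : μ ∈ {γ' : Γ | v (g - tr g γ') = (γ' : WithTop Γ)} := heq.symm
    rw [spg] at this
    exact absurd this.symm (ne_of_lt hμ)
  -- transfer lemma
  have trans : ∀ (x : E) (μ : Γ), γ < μ → v (x - g) = (μ : WithTop Γ) →
      v (x - tr x μ) = (μ : WithTop Γ) := by
    intro x μ hγμ hxg
    have htr : tr x μ = tr g μ := by
      have h1 : tr ((x - g) + g) μ = tr (x - g) μ + tr g μ := t4a _ _ _
      rw [show (x - g) + g = x by abel, t2 (x - g) μ (le_of_eq hxg.symm), zero_add] at h1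
      exact h1
    have : v ((x - g) + (g - tr g μ)) = v (x - g) := by
      apply ulem
      rw [hxg]; exact gblock μ hγμ
    rw [show (x - g) + (g - tr g μ) = x - tr g μ by abel, hxg] at this
    rw [htr]; exact this
  constructor
  · -- Part 1
    rintro ⟨δ₀, hsp⟩
    have hγh : γ ∈ {γ' : Γ | v (h - tr h γ') = (γ' : WithTop Γ)} := by
      have : tr h γ = 0 := t2 h γ (le_of_eq vh.symm)
      simp only [Set.mem_setOf_eq, this, sub_zero]
      exact vh
    rw [hsp] at hγh
    by_contra hne
    have hne' : h - g ≠ 0 := by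
      intro h0
      exact hne (by linear_combination (norm := abel) -h0)
    have : v (h - g) ≠ ⊤ := fun ht => hne' ((hv0 _).mp ht)
    obtain ⟨μ, hμ⟩ := WithTop.ne_top_iff_exists.mp this
    have hγμ : γ < μ := by
      rw [← hμ] at hvg
      exact_mod_cast hvg
    have : μ ∈ {γ' : Γ | v (h - tr h γ') = (γ' : WithTop Γ)} :=
      trans h μ hγμ hμ.symm
    rw [hsp] at this
    have h2 : μ = γ := (Set.mem_singleton_iff.mp this).trans (Set.mem_singleton_iff.mp hγh).symm
    exact (ne_of_lt hγμ) h2.symm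
  · -- Part 2
    intro β hβ hgap
    set e : E := tr h β with he
    by_contra hne
    have hne' : e - g ≠ 0 := sub_ne_zero.mpr fun h0 => hne h0.symm
    have hvt : v (e - g) ≠ ⊤ := fun ht => hne' ((hv0 _).mp ht)
    obtain ⟨μ, hμ⟩ := WithTop.ne_top_iff_exists.mp hvt
    -- γ < μ
    have hγμ : γ < μ := by
      have h1 := hva (h - g) (-(h - e))
      rw [show (h - g) + -(h - e) = e - g by abel, vneg] at h1
      have h2 : (γ : WithTop Γ) < min (v (h - g)) (v (h - e)) :=
        lt_min hvg (lt_of_lt_of_le (by exact_mod_cast hβ) (t1 h β))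
      have : (γ : WithTop Γ) < v (e - g) := lt_of_lt_of_le h2 h1
      rw [← hμ] at this
      exact_mod_cast this
    have hμe : v (e - tr e μ) = (μ : WithTop Γ) := trans e μ hγμ hμ.symm
    -- tr e β = e
    have htreβ : tr e β = e := by
      have h1 : tr ((h - e) + e) β = tr (h - e) β + tr e β := t4a _ _ _
      rw [show (h - e) + e = h by abel, t2 (h - e) β (t1 h β), zero_add] at h1
      exact h1.symm
    rcases lt_or_ge μ β with hμβ | hβμ
    · -- μ < β : then μ ∈ sp h, contradicting the gap
      have htr : tr h μ = tr e μ := by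
        have h1 : tr ((h - e) + e) μ = tr (h - e) μ + tr e μ := t4a _ _ _
        have h2 : tr (h - e) μ = 0 :=
          t2 (h - e) μ (le_of_lt (lt_of_lt_of_le (by exact_mod_cast hμβ) (t1 h β)))
        rw [show (h - e) + e = h by abel, h2, zero_add] at h1
        exact h1
      have : v ((e - tr e μ) + (h - e)) = v (e - tr e μ) := by
        apply ulem
        rw [hμe]
        exact lt_of_lt_of_le (by exact_mod_cast hμβ) (t1 h β)
      rw [show (e - tr e μ) + (h - e) = h - tr e μ by abel, hμe, ← htr] at this
      exact hgap μ this ⟨hγμ, hμβ⟩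
    · -- β ≤ μ : then tr e μ = e, contradiction
      have htreμ : tr e μ = e := by
        rcases eq_or_lt_of_le hβμ with heq | hlt
        · rw [← heq]; exact htreβ
        · calc tr e μ = tr (tr e β) μ := by rw [htreβ]
            _ = tr e β := t3 e β μ hlt
            _ = e := htreβ
      rw [htreμ, sub_self] at hμe
      have : v (0 : E) = ⊤ := (hv0 0).mpr rfl
      rw [this] at hμe
      exact (WithTop.coe_ne_top hμe.symm)
end

section
/- The γ-term map is additive: (f+g)γ = fγ + gγ and (cf)γ = c·(fγ) for all f, g ∈ E, c ∈ C; consequently the map f ↦ (fγ)_{γ∈Γ} from E to E^Γ is injective. -/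
/-!
The `γ`-term of `f` is characterised as the unique `h` with `sp h ⊆ {γ}` and
`γ < v (f - f|_γ - h)`: two such elements differ by some `d` with `sp d ⊆ {γ}` and `γ < v d`,
and this forces `d = 0` because a nonzero `d` has `v d ∈ sp d`. The characterising property is
stable under sums and scalar multiples, which gives linearity. For injectivity, if `f ≠ g` then
`γ := v (f - g)` lies in `sp (f - g)`, so the `γ`-term of `f - g` cannot vanish.
-/

namespace Truncation

variable {C E Γ : Type*} [Field C] [AddCommGroup E] [Module C E]
  {v : E → WithTop Γ} {tr : E → Γ → E}

theorem v_neg (hvc : ∀ (c : C) (f : E), c ≠ 0 → v (c • f) = v f) (f : E) : v (-f) = v f := by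
  simpa using hvc (-1) f (by norm_num)

def sp (v : E → WithTop Γ) (tr : E → Γ → E) (f : E) : Set Γ :=
  {γ | v (f - tr f γ) = γ}

theorem sp_smul (hvc : ∀ (c : C) (f : E), c ≠ 0 → v (c • f) = v f)
    (t4s : ∀ (c : C) (f : E) (α : Γ), tr (c • f) α = c • tr f α) {c : C} (hc : c ≠ 0) (f : E) :
    sp v tr (c • f) = sp v tr f := by
  ext γ
  simp only [sp, Set.mem_ofPred_eq, t4s, ← smul_sub, hvc c _ hc]

theorem sp_neg (hvc : ∀ (c : C) (f : E), c ≠ 0 → v (c • f) = v f)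
    (t4s : ∀ (c : C) (f : E) (α : Γ), tr (c • f) α = c • tr f α) (f : E) :
    sp v tr (-f) = sp v tr f := by
  simpa using sp_smul hvc t4s (neg_ne_zero.2 one_ne_zero) f

variable [LinearOrder Γ]

theorem min_le_v_sub (hvc : ∀ (c : C) (f : E), c ≠ 0 → v (c • f) = v f)
    (hva : ∀ f g : E, min (v f) (v g) ≤ v (f + g)) (f g : E) : min (v f) (v g) ≤ v (f - g) := by
  simpa [sub_eq_add_neg, v_neg hvc] using hva f (-g)

theorem lt_v_add (hva : ∀ f g : E, min (v f) (v g) ≤ v (f + g)) {a : WithTop Γ} {f g : E}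
    (hf : a < v f) (hg : a < v g) : a < v (f + g) :=
  (lt_min hf hg).trans_le (hva f g)

theorem lt_v_sub (hvc : ∀ (c : C) (f : E), c ≠ 0 → v (c • f) = v f)
    (hva : ∀ f g : E, min (v f) (v g) ≤ v (f + g)) {a : WithTop Γ} {f g : E}
    (hf : a < v f) (hg : a < v g) : a < v (f - g) :=
  (lt_min hf hg).trans_le (min_le_v_sub hvc hva f g)

theorem v_eq_of_lt_v_sub (hvc : ∀ (c : C) (f : E), c ≠ 0 → v (c • f) = v f)
    (hva : ∀ f g : E, min (v f) (v g) ≤ v (f + g)) {f g : E} (h : v f < v (f - g)) :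
    v g = v f := by
  refine le_antisymm (not_lt.1 fun hlt => ?_) ?_
  · simpa using lt_v_add hva hlt h
  · simpa [min_eq_left h.le] using min_le_v_sub hvc hva f (f - g)

theorem sp_zero (hv0 : ∀ f : E, v f = ⊤ ↔ f = 0)
    (t2 : ∀ (f : E) (α : Γ), (α : WithTop Γ) ≤ v f → tr f α = 0) : sp v tr 0 = ∅ := by
  have hv : v 0 = ⊤ := (hv0 0).2 rfl
  ext γ
  simp [sp, t2 0 γ (by simp [hv]), hv]

theorem mem_sp_of_v_eq (t2 : ∀ (f : E) (α : Γ), (α : WithTop Γ) ≤ v f → tr f α = 0)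
    {f : E} {γ : Γ} (h : v f = γ) : γ ∈ sp v tr f := by
  simp [sp, t2 f γ h.ge, h]

theorem sp_add_subset (hva : ∀ f g : E, min (v f) (v g) ≤ v (f + g))
    (t1 : ∀ (f : E) (α : Γ), (α : WithTop Γ) ≤ v (f - tr f α))
    (t4a : ∀ (f g : E) (α : Γ), tr (f + g) α = tr f α + tr g α) (f g : E) :
    sp v tr (f + g) ⊆ sp v tr f ∪ sp v tr g := by
  intro γ hγ
  by_contra hne
  simp only [Set.mem_union, not_or] at hne
  have hsplit : f + g - tr (f + g) γ = (f - tr f γ) + (g - tr g γ) := by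
    rw [t4a]; abel
  have := lt_v_add hva ((t1 f γ).lt_of_ne' hne.1) ((t1 g γ).lt_of_ne' hne.2)
  rw [← hsplit, hγ] at this
  exact lt_irrefl _ this

theorem sp_sub_subset (hvc : ∀ (c : C) (f : E), c ≠ 0 → v (c • f) = v f)
    (hva : ∀ f g : E, min (v f) (v g) ≤ v (f + g))
    (t1 : ∀ (f : E) (α : Γ), (α : WithTop Γ) ≤ v (f - tr f α))
    (t4a : ∀ (f g : E) (α : Γ), tr (f + g) α = tr f α + tr g α)
    (t4s : ∀ (c : C) (f : E) (α : Γ), tr (c • f) α = c • tr f α) (f g : E) :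
    sp v tr (f - g) ⊆ sp v tr f ∪ sp v tr g := by
  simpa [sub_eq_add_neg, sp_neg hvc t4s] using sp_add_subset hva t1 t4a f (-g)

theorem eq_zero_of_sp_subset_of_lt_v (hv0 : ∀ f : E, v f = ⊤ ↔ f = 0)
    (t2 : ∀ (f : E) (α : Γ), (α : WithTop Γ) ≤ v f → tr f α = 0) {f : E} {γ : Γ}
    (hsp : sp v tr f ⊆ {γ}) (hlt : (γ : WithTop Γ) < v f) : f = 0 := by
  by_contra hf
  obtain ⟨β, hβ⟩ := WithTop.ne_top_iff_exists.1 (mt (hv0 f).1 hf)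
  obtain rfl : β = γ := hsp (mem_sp_of_v_eq t2 hβ.symm)
  exact hlt.ne hβ

def IsTermAt (v : E → WithTop Γ) (tr : E → Γ → E) (f : E) (γ : Γ) (h : E) : Prop :=
  sp v tr h ⊆ {γ} ∧ (γ : WithTop Γ) < v (f - tr f γ - h)

namespace IsTermAt

theorem add (hva : ∀ f g : E, min (v f) (v g) ≤ v (f + g))
    (t1 : ∀ (f : E) (α : Γ), (α : WithTop Γ) ≤ v (f - tr f α))
    (t4a : ∀ (f g : E) (α : Γ), tr (f + g) α = tr f α + tr g α) {f g h k : E} {γ : Γ}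
    (hh : IsTermAt v tr f γ h) (hk : IsTermAt v tr g γ k) : IsTermAt v tr (f + g) γ (h + k) := by
  refine ⟨(sp_add_subset hva t1 t4a h k).trans (Set.union_subset hh.1 hk.1), ?_⟩
  have hsplit : f + g - tr (f + g) γ - (h + k) = (f - tr f γ - h) + (g - tr g γ - k) := by
    rw [t4a]; abel
  rw [hsplit]
  exact lt_v_add hva hh.2 hk.2

theorem zero (hv0 : ∀ f : E, v f = ⊤ ↔ f = 0)
    (t2 : ∀ (f : E) (α : Γ), (α : WithTop Γ) ≤ v f → tr f α = 0) (γ : Γ) :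
    IsTermAt v tr 0 γ 0 := by
  refine ⟨by simp [sp_zero hv0 t2], ?_⟩
  simp [t2 0 γ (by simp [(hv0 0).2 rfl]), (hv0 0).2 rfl]

theorem smul (hv0 : ∀ f : E, v f = ⊤ ↔ f = 0)
    (hvc : ∀ (c : C) (f : E), c ≠ 0 → v (c • f) = v f)
    (t2 : ∀ (f : E) (α : Γ), (α : WithTop Γ) ≤ v f → tr f α = 0)
    (t4s : ∀ (c : C) (f : E) (α : Γ), tr (c • f) α = c • tr f α) (c : C) {f h : E} {γ : Γ}
    (hh : IsTermAt v tr f γ h) : IsTermAt v tr (c • f) γ (c • h) := by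
  rcases eq_or_ne c 0 with rfl | hc
  · simpa using zero hv0 t2 γ
  refine ⟨(sp_smul hvc t4s hc h).trans_subset hh.1, ?_⟩
  rw [t4s, ← smul_sub, ← smul_sub, hvc c _ hc]
  exact hh.2

theorem unique (hv0 : ∀ f : E, v f = ⊤ ↔ f = 0)
    (hvc : ∀ (c : C) (f : E), c ≠ 0 → v (c • f) = v f)
    (hva : ∀ f g : E, min (v f) (v g) ≤ v (f + g))
    (t1 : ∀ (f : E) (α : Γ), (α : WithTop Γ) ≤ v (f - tr f α))
    (t2 : ∀ (f : E) (α : Γ), (α : WithTop Γ) ≤ v f → tr f α = 0)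
    (t4a : ∀ (f g : E) (α : Γ), tr (f + g) α = tr f α + tr g α)
    (t4s : ∀ (c : C) (f : E) (α : Γ), tr (c • f) α = c • tr f α) {f h k : E} {γ : Γ}
    (hh : IsTermAt v tr f γ h) (hk : IsTermAt v tr f γ k) : h = k := by
  refine sub_eq_zero.1 (eq_zero_of_sp_subset_of_lt_v hv0 t2 (γ := γ) ?_ ?_)
  · exact (sp_sub_subset hvc hva t1 t4a t4s h k).trans (Set.union_subset hh.1 hk.1)
  · have hdiff : h - k = (f - tr f γ - k) - (f - tr f γ - h) := by abel
    rw [hdiff]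
    exact lt_v_sub hvc hva hk.2 hh.2

theorem ne_zero {f h : E} {γ : Γ} (hh : IsTermAt v tr f γ h) (hγ : γ ∈ sp v tr f) : h ≠ 0 := by
  rintro rfl
  have hlt := hh.2
  rw [sub_zero, hγ] at hlt
  exact lt_irrefl _ hlt

end IsTermAt

theorem isTermAt_of_sp_eq_singleton (hv0 : ∀ f : E, v f = ⊤ ↔ f = 0)
    (hvc : ∀ (c : C) (f : E), c ≠ 0 → v (c • f) = v f)
    (hva : ∀ f g : E, min (v f) (v g) ≤ v (f + g))
    (t1 : ∀ (f : E) (α : Γ), (α : WithTop Γ) ≤ v (f - tr f α))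
    (t2 : ∀ (f : E) (α : Γ), (α : WithTop Γ) ≤ v f → tr f α = 0) {f h : E} {γ : Γ}
    (h0 : γ ∉ sp v tr f → h = 0)
    (h1 : γ ∈ sp v tr f → (∃ δ : Γ, sp v tr h = {δ}) ∧ (γ : WithTop Γ) < v (f - tr f γ - h)) :
    IsTermAt v tr f γ h := by
  by_cases hγ : γ ∈ sp v tr f
  · obtain ⟨⟨δ, hδ⟩, hlt⟩ := h1 hγ
    have hvf : v (f - tr f γ) = γ := hγ
    have hvh : v h = γ := (v_eq_of_lt_v_sub hvc hva (hvf ▸ hlt)).trans hvf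
    obtain rfl : γ = δ := by simpa [hδ] using mem_sp_of_v_eq t2 hvh
    exact ⟨hδ.subset, hlt⟩
  · rw [h0 hγ]
    exact ⟨by simp [sp_zero hv0 t2], (sub_zero (f - tr f γ)).symm ▸ (t1 f γ).lt_of_ne' hγ⟩

end Truncation

open Truncation in
theorem stmt_15_general
    (C : Type*) [Field C] (E : Type*) [AddCommGroup E] [Module C E]
    (Γ : Type*) [LinearOrder Γ]
    (v : E → WithTop Γ)
    (hv0 : ∀ f : E, v f = ⊤ ↔ f = 0)
    (hvc : ∀ (c : C) (f : E), c ≠ 0 → v (c • f) = v f)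
    (hva : ∀ f g : E, min (v f) (v g) ≤ v (f + g))
    (tr : E → Γ → E)
    (t1 : ∀ (f : E) (α : Γ), (α : WithTop Γ) ≤ v (f - tr f α))
    (t2 : ∀ (f : E) (α : Γ), (α : WithTop Γ) ≤ v f → tr f α = 0)
    (t4a : ∀ (f g : E) (α : Γ), tr (f + g) α = tr f α + tr g α)
    (t4s : ∀ (c : C) (f : E) (α : Γ), tr (c • f) α = c • tr f α)
    (term : E → Γ → E)
    (hterm0 : ∀ (f : E) (γ : Γ), γ ∉ {γ' : Γ | v (f - tr f γ') = (γ' : WithTop Γ)} → term f γ = 0)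
    (hterm1 : ∀ (f : E) (γ : Γ), γ ∈ {γ' : Γ | v (f - tr f γ') = (γ' : WithTop Γ)} →
      (∃ δ : Γ, {γ' : Γ | v (term f γ - tr (term f γ) γ') = (γ' : WithTop Γ)} = {δ}) ∧
      (γ : WithTop Γ) < v (f - tr f γ - term f γ)) :
    (∀ (f g : E) (γ : Γ), term (f + g) γ = term f γ + term g γ) ∧
    (∀ (c : C) (f : E) (γ : Γ), term (c • f) γ = c • term f γ) ∧
    Function.Injective term := by
  have hterm (f : E) (γ : Γ) : IsTermAt v tr f γ (term f γ) :=
    isTermAt_of_sp_eq_singleton hv0 hvc hva t1 t2 (hterm0 f γ) (hterm1 f γ)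
  have hadd (f g : E) (γ : Γ) : term (f + g) γ = term f γ + term g γ :=
    (hterm (f + g) γ).unique hv0 hvc hva t1 t2 t4a t4s ((hterm f γ).add hva t1 t4a (hterm g γ))
  refine ⟨hadd, fun c f γ => ?_, fun f g hfg => ?_⟩
  · exact (hterm (c • f) γ).unique hv0 hvc hva t1 t2 t4a t4s
      ((hterm f γ).smul hv0 hvc t2 t4s c)
  · by_contra hne
    obtain ⟨γ, hγ⟩ := WithTop.ne_top_iff_exists.1 (mt (hv0 (f - g)).1 (sub_ne_zero.2 hne))
    have hsub : term (f - g) γ = term f γ - term g γ :=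
      eq_sub_of_add_eq (by rw [← hadd, sub_add_cancel])
    exact (hterm (f - g) γ).ne_zero (mem_sp_of_v_eq t2 hγ.symm) (by rw [hsub, hfg, sub_self])

theorem stmt_15
    (C : Type*) [Field C] (E : Type*) [AddCommGroup E] [Module C E]
    (Γ : Type*) [LinearOrder Γ]
    (v : E → WithTop Γ)
    (hv0 : ∀ f : E, v f = ⊤ ↔ f = 0)
    (hvc : ∀ (c : C) (f : E), c ≠ 0 → v (c • f) = v f)
    (hva : ∀ f g : E, min (v f) (v g) ≤ v (f + g))
    (tr : E → Γ → E)
    (t1 : ∀ (f : E) (α : Γ), (α : WithTop Γ) ≤ v (f - tr f α))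
    (t2 : ∀ (f : E) (α : Γ), (α : WithTop Γ) ≤ v f → tr f α = 0)
    (t3 : ∀ (f : E) (α β : Γ), α < β → tr (tr f α) β = tr f α)
    (t4a : ∀ (f g : E) (α : Γ), tr (f + g) α = tr f α + tr g α)
    (t4s : ∀ (c : C) (f : E) (α : Γ), tr (c • f) α = c • tr f α)
    (hwf : ∀ f : E, {γ : Γ | v (f - tr f γ) = (γ : WithTop Γ)}.IsWF)
    (term : E → Γ → E)
    (hterm0 : ∀ (f : E) (γ : Γ), γ ∉ {γ' : Γ | v (f - tr f γ') = (γ' : WithTop Γ)} → term f γ = 0)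
    (hterm1 : ∀ (f : E) (γ : Γ), γ ∈ {γ' : Γ | v (f - tr f γ') = (γ' : WithTop Γ)} →
      (∃ δ : Γ, {γ' : Γ | v (term f γ - tr (term f γ) γ') = (γ' : WithTop Γ)} = {δ}) ∧
      (γ : WithTop Γ) < v (f - tr f γ - term f γ)) :
    (∀ (f g : E) (γ : Γ), term (f + g) γ = term f γ + term g γ) ∧
    (∀ (c : C) (f : E) (γ : Γ), term (c • f) γ = c • term f γ) ∧
    Function.Injective term :=
  stmt_15_general C E Γ v hv0 hvc hva tr t1 t2 t4a t4s term hterm0 hterm1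
end

section
/- Suppose E is a Hahn space and sp(f) is wellordered for all f. Then there exists a C-linear embedding e : E → C[[t^Γ]] into the Hahn space of wellordered-support formal series such that v_t(e(f)) = v(f) and e(f|_α) = e(f)|_α for all f ∈ E and α ∈ Γ. -/
noncomputable def hahnTrunc {Γ : Type*} [LinearOrder Γ] {C : Type*} [Zero C]
    (x : HahnSeries Γ C) (α : Γ) : HahnSeries Γ C :=
  ⟨fun γ => if γ < α then x.coeff γ else 0, by
    refine x.isPWO_support'.mono ?_
    intro γ hγ
    simp only [Function.mem_support] at hγ ⊢
    intro h
    apply hγ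
    simp [h]⟩

theorem stmt_16
    (C : Type*) [Field C] (E : Type*) [AddCommGroup E] [Module C E]
    (Γ : Type*) [LinearOrder Γ]
    (v : E → WithTop Γ)
    (hv0 : ∀ f : E, v f = ⊤ ↔ f = 0)
    (hvc : ∀ (c : C) (f : E), c ≠ 0 → v (c • f) = v f)
    (hva : ∀ f g : E, min (v f) (v g) ≤ v (f + g))
    (tr : E → Γ → E)
    (t1 : ∀ (f : E) (α : Γ), (α : WithTop Γ) ≤ v (f - tr f α))
    (t2 : ∀ (f : E) (α : Γ), (α : WithTop Γ) ≤ v f → tr f α = 0)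
    (t3 : ∀ (f : E) (α β : Γ), α < β → tr (tr f α) β = tr f α)
    (t4a : ∀ (f g : E) (α : Γ), tr (f + g) α = tr f α + tr g α)
    (t4s : ∀ (c : C) (f : E) (α : Γ), tr (c • f) α = c • tr f α)
    (hsurj : Function.Surjective v)
    (hahn : ∀ f g : E, f ≠ 0 → g ≠ 0 → v f = v g → ∃ c : C, c ≠ 0 ∧ v f < v (f - c • g))
    (hwf : ∀ f : E, {γ : Γ | v (f - tr f γ) = (γ : WithTop Γ)}.IsWF) :
    ∃ e : E →ₗ[C] HahnSeries Γ C,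
      Function.Injective e ∧
      (∀ f : E, (e f).orderTop = v f) ∧
      (∀ (f : E) (α : Γ), e (tr f α) = hahnTrunc (e f) α) := by
  classical
  -- basic valuation facts
  have hvzero : v (0 : E) = ⊤ := (hv0 0).mpr rfl
  have hvneg : ∀ f : E, v (-f) = v f := by
    intro f
    have := hvc (-1 : C) f (by norm_num)
    simpa using this
  have hvsub : ∀ f g : E, min (v f) (v g) ≤ v (f - g) := by
    intro f g
    have := hva f (-g)
    rw [hvneg g] at this
    simpa [sub_eq_add_neg] using this
  have htr0 : ∀ γ : Γ, tr (0 : E) γ = 0 := fun γ => t2 0 γ (by simp [hvzero])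
  -- section of v
  have hsec : ∀ γ : Γ, ∃ g : E, v g = (γ : WithTop Γ) := fun γ => hsurj γ
  choose sec hsecv using hsec
  have hsecne : ∀ γ : Γ, sec γ ≠ 0 := by
    intro γ h
    have := hsecv γ
    rw [h, hvzero] at this
    simp at this
  -- existence and uniqueness of coefficients
  have exu : ∀ (f : E) (γ : Γ),
      ∃! c : C, (γ : WithTop Γ) < v (f - tr f γ - c • sec γ) := by
    intro f γ
    have h1 := t1 f γ
    have exist : ∃ c : C, (γ : WithTop Γ) < v (f - tr f γ - c • sec γ) := by
      rcases lt_or_eq_of_le h1 with h | h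
      · exact ⟨0, by simpa using h⟩
      · have hne : f - tr f γ ≠ 0 := by
          intro h0
          rw [h0, hvzero] at h
          simp at h
        obtain ⟨c, hc0, hc⟩ := hahn (f - tr f γ) (sec γ) hne (hsecne γ)
          (by rw [← h, hsecv γ])
        exact ⟨c, h ▸ hc⟩
    obtain ⟨c, hc⟩ := exist
    refine ⟨c, hc, ?_⟩
    intro c' hc'
    by_contra hne
    have hd : (c - c') • sec γ =
        (f - tr f γ - c' • sec γ) - (f - tr f γ - c • sec γ) := by
      rw [sub_smul]; abel
    have hvd : v ((c - c') • sec γ) = (γ : WithTop Γ) := by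
      rw [hvc _ _ (sub_ne_zero.mpr (Ne.symm hne)), hsecv]
    have : (γ : WithTop Γ) < v ((c - c') • sec γ) := by
      rw [hd]
      exact lt_of_lt_of_le (lt_min hc' hc) (hvsub _ _)
    rw [hvd] at this
    exact lt_irrefl _ this
  set co : E → Γ → C := fun f γ => (exu f γ).choose with hco_def
  have hco : ∀ (f : E) (γ : Γ),
      (γ : WithTop Γ) < v (f - tr f γ - co f γ • sec γ) :=
    fun f γ => (exu f γ).choose_spec.1
  have hcu : ∀ (f : E) (γ : Γ) (c : C),
      (γ : WithTop Γ) < v (f - tr f γ - c • sec γ) → co f γ = c := by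
    intro f γ c h
    exact (exu f γ).unique (hco f γ) h
  -- support is contained in the WF set
  have hsupp : ∀ (f : E) (γ : Γ), co f γ ≠ 0 → v (f - tr f γ) = (γ : WithTop Γ) := by
    intro f γ hne
    rcases lt_or_eq_of_le (t1 f γ) with h | h
    · exact absurd (hcu f γ 0 (by simpa using h)) hne
    · exact h.symm
  have hpwo : ∀ f : E, (Function.support (co f)).IsPWO := by
    intro f
    refine ((hwf f).isPWO).mono ?_
    intro γ hγ
    exact hsupp f γ hγ
  -- the Hahn series map
  set eF : E → HahnSeries Γ C := fun f => ⟨co f, hpwo f⟩ with heF_def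
  have heF_coeff : ∀ (f : E) (γ : Γ), (eF f).coeff γ = co f γ := fun _ _ => rfl
  -- additivity of coefficients
  have hadd : ∀ (f g : E) (γ : Γ), co (f + g) γ = co f γ + co g γ := by
    intro f g γ
    apply hcu
    have hrw : f + g - tr (f + g) γ - (co f γ + co g γ) • sec γ =
        (f - tr f γ - co f γ • sec γ) + (g - tr g γ - co g γ • sec γ) := by
      rw [t4a, add_smul]; abel
    rw [hrw]
    exact lt_of_lt_of_le (lt_min (hco f γ) (hco g γ)) (hva _ _)
  have hzeroco : ∀ γ : Γ, co (0 : E) γ = 0 := by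
    intro γ
    apply hcu
    rw [htr0 γ, zero_smul, sub_zero, sub_zero, hvzero]
    exact WithTop.coe_lt_top γ
  have hsmul : ∀ (c : C) (f : E) (γ : Γ), co (c • f) γ = c * co f γ := by
    intro c f γ
    by_cases hc : c = 0
    · simp [hc, hzeroco]
    · apply hcu
      have hrw : c • f - tr (c • f) γ - (c * co f γ) • sec γ =
          c • (f - tr f γ - co f γ • sec γ) := by
        rw [t4s, mul_smul, smul_sub, smul_sub]
      rw [hrw, hvc c _ hc]
      exact hco f γ
  -- linear map
  set eL : E →ₗ[C] HahnSeries Γ C :=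
    { toFun := eF
      map_add' := by
        intro f g
        ext γ
        exact hadd f g γ
      map_smul' := by
        intro c f
        ext γ
        simpa using hsmul c f γ } with heL_def
  have heL : ∀ f : E, eL f = eF f := fun _ => rfl
  -- orderTop property
  have horder : ∀ f : E, (eF f).orderTop = v f := by
    intro f
    by_cases hf : f = 0
    · subst hf
      have : eF 0 = 0 := by
        ext γ
        exact hzeroco γ
      rw [this, HahnSeries.orderTop_zero, hvzero]
    · have hvne : v f ≠ ⊤ := fun h => hf ((hv0 f).mp h)
      obtain ⟨α, hα'⟩ := WithTop.ne_top_iff_exists.mp hvne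
      have hα : v f = (α : WithTop Γ) := hα'.symm
      · -- coefficient at α is nonzero
        have htrα : tr f α = 0 := t2 f α (le_of_eq hα.symm)
        have hvfα : v (f - tr f α) = (α : WithTop Γ) := by rw [htrα, sub_zero, hα]
        have hcoα : co f α ≠ 0 := by
          intro h0
          have := hco f α
          rw [h0, zero_smul, sub_zero, hvfα] at this
          exact lt_irrefl _ this
        have hlt : ∀ γ : Γ, γ < α → co f γ = 0 := by
          intro γ hγ
          apply hcu
          have htrγ : tr f γ = 0 := t2 f γ (by rw [hα]; exact_mod_cast hγ.le)
          rw [htrγ, sub_zero, zero_smul, sub_zero, hα]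
          exact_mod_cast hγ
        rw [hα]
        apply HahnSeries.orderTop_eq_of_le
        · exact hcoα
        · intro γ hγ
          by_contra hlt'
          exact hγ (hlt γ (lt_of_not_ge hlt'))
  -- truncation property
  have htrunc : ∀ (f : E) (α : Γ), eF (tr f α) = hahnTrunc (eF f) α := by
    intro f α
    ext γ
    show co (tr f α) γ = if γ < α then co f γ else 0
    rcases lt_trichotomy γ α with h | h | h
    · rw [if_pos h]
      apply hcu
      have htt : tr (tr f α) γ = tr f γ := by
        have key : f = tr f α + (f - tr f α) := by abel
        have hsplit : tr f γ = tr (tr f α) γ + tr (f - tr f α) γ := by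
          rw [← t4a, ← key]
        have hz : tr (f - tr f α) γ = 0 :=
          t2 _ γ (le_trans (by exact_mod_cast h.le) (t1 f α))
        rw [hsplit, hz, add_zero]
      have hrw : tr f α - tr (tr f α) γ - co f γ • sec γ =
          (f - tr f γ - co f γ • sec γ) - (f - tr f α) := by
        rw [htt]; abel
      rw [hrw]
      refine lt_of_lt_of_le (lt_min (hco f γ) ?_) (hvsub _ _)
      exact lt_of_lt_of_le (by exact_mod_cast h) (t1 f α)
    · subst h
      rw [if_neg (lt_irrefl γ)]
      apply hcu
      have htt : tr (tr f γ) γ = tr f γ := by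
        have key : f = tr f γ + (f - tr f γ) := by abel
        have hsplit : tr f γ = tr (tr f γ) γ + tr (f - tr f γ) γ := by
          rw [← t4a, ← key]
        have hz : tr (f - tr f γ) γ = 0 := t2 _ γ (t1 f γ)
        conv_rhs => rw [hsplit, hz, add_zero]
      rw [htt, zero_smul, sub_zero, sub_self, hvzero]
      exact WithTop.coe_lt_top γ
    · rw [if_neg (not_lt.mpr h.le)]
      apply hcu
      rw [t3 f α γ h, zero_smul, sub_zero, sub_self, hvzero]
      exact WithTop.coe_lt_top γ
  -- conclude
  refine ⟨eL, ?_, fun f => horder f, fun f α => htrunc f α⟩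
  intro f g hfg
  have : eL (f - g) = 0 := by rw [map_sub, hfg, sub_self]
  have h2 : (eF (f - g)).orderTop = ⊤ := by
    rw [← heL, this, HahnSeries.orderTop_zero]
  rw [horder] at h2
  exact sub_eq_zero.mp ((hv0 _).mp h2)
end

section
/- Assume (T6): for all f, g, γ, if α + β < γ for all α ∈ sp(f), β ∈ sp(g), then δ < γ for all δ ∈ sp(fg). Then for all f, g ∈ F: sp(fg) ⊆ sp(f) + sp(g) := {α + β : α ∈ sp(f), β ∈ sp(g)}. -/
/-!
Suppose `δ ∈ sp(fg)` is no sum `α + β` with `α ∈ sp f`, `β ∈ sp g`, and let `δ ∈ sp(xg)` with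
`sp x ⊆ sp f` and `a ≤ v x`. Split `g` at the least `w ∈ sp g` with `δ < a + w`: the tail
`x (g - g|_w)` has valuation above `δ`, so by (T6) some `α ∈ sp x`, `β ∈ sp g` satisfy
`a + β ≤ δ < α + β`. Cutting `x` at the least such `α`, the same argument rules out `x|_α g`, so
`δ ∈ sp((x - x|_α) g)`, and for the new bound `α` the critical `β` lies strictly below every
`u ∈ sp g` with `δ < a + u`. This descent in the wellordered set `sp g` must stop.
-/

open Set

namespace AddValuation

variable {R Γ : Type*} [Ring R] [AddCommGroup Γ] [LinearOrder Γ] [IsOrderedAddMonoid Γ]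

structure Truncation (v : AddValuation R (WithTop Γ)) where
  trunc : R → Γ → R
  le_val_sub_trunc (f : R) (α : Γ) : (α : WithTop Γ) ≤ v (f - trunc f α)
  trunc_eq_zero (f : R) (α : Γ) : (α : WithTop Γ) ≤ v f → trunc f α = 0
  trunc_trunc_of_lt (f : R) {α β : Γ} : α < β → trunc (trunc f α) β = trunc f α
  trunc_add (f g : R) (α : Γ) : trunc (f + g) α = trunc f α + trunc g α
  isWF (f : R) : {γ : Γ | v (f - trunc f γ) = γ}.IsWF

namespace Truncation

variable {v : AddValuation R (WithTop Γ)} (T : v.Truncation)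

def support (f : R) : Set Γ := {γ | v (f - T.trunc f γ) = γ}

/-- Axiom (T6). -/
def BoundsSupportMul : Prop :=
  ∀ (f g : R) (γ : Γ), (∀ α ∈ T.support f, ∀ β ∈ T.support g, α + β < γ) →
    ∀ δ ∈ T.support (f * g), δ < γ

variable {T} {f g x y : R} {a b δ γ : Γ}

theorem mem_support : γ ∈ T.support f ↔ v (f - T.trunc f γ) = γ := Iff.rfl

theorem isWF_support (f : R) : (T.support f).IsWF := T.isWF f

theorem trunc_neg (f : R) (α : Γ) : T.trunc (-f) α = -T.trunc f α := by
  rw [eq_neg_iff_add_eq_zero, ← T.trunc_add, neg_add_cancel,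
    T.trunc_eq_zero 0 α (by simp)]

theorem trunc_trunc_of_ge (h : b ≤ a) : T.trunc (T.trunc f a) b = T.trunc f b := by
  have hsplit := T.trunc_add (T.trunc f a) (f - T.trunc f a) b
  rwa [add_sub_cancel, T.trunc_eq_zero _ _ ((WithTop.coe_le_coe.2 h).trans (T.le_val_sub_trunc f a)),
    add_zero, eq_comm] at hsplit

theorem trunc_trunc_of_le (h : a ≤ b) : T.trunc (T.trunc f a) b = T.trunc f a := by
  rcases h.lt_or_eq with h | rfl
  · exact T.trunc_trunc_of_lt f h
  · exact trunc_trunc_of_ge le_rfl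

theorem lt_val_sub_trunc (h : γ ∉ T.support f) : (γ : WithTop Γ) < v (f - T.trunc f γ) :=
  (T.le_val_sub_trunc f γ).lt_of_ne (Ne.symm h)

theorem notMem_support_of_lt_val (h : (γ : WithTop Γ) < v f) : γ ∉ T.support f := by
  rw [mem_support, T.trunc_eq_zero f γ h.le, sub_zero]
  exact h.ne'

theorem le_of_mem_support (ha : (a : WithTop Γ) ≤ v f) (hγ : γ ∈ T.support f) : a ≤ γ :=
  le_of_not_gt fun h => notMem_support_of_lt_val ((WithTop.coe_lt_coe.2 h).trans_le ha) hγ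

theorem support_neg (f : R) : T.support (-f) = T.support f := by
  ext γ
  rw [mem_support, mem_support, trunc_neg, ← neg_add', map_neg, sub_eq_add_neg]

theorem support_add_subset (f g : R) : T.support (f + g) ⊆ T.support f ∪ T.support g := by
  intro γ hγ
  by_contra h
  rw [mem_union, not_or] at h
  have hlt : (γ : WithTop Γ) < v (f - T.trunc f γ + (g - T.trunc g γ)) :=
    (lt_min (lt_val_sub_trunc h.1) (lt_val_sub_trunc h.2)).trans_le (v.map_add _ _)
  rw [mem_support, T.trunc_add, add_sub_add_comm] at hγ
  exact hlt.ne' hγ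

theorem support_sub_subset (f g : R) : T.support (f - g) ⊆ T.support f ∪ T.support g := by
  simpa only [sub_eq_add_neg, support_neg] using T.support_add_subset f (-g)

theorem support_trunc_subset_Iio (f : R) (c : Γ) : T.support (T.trunc f c) ⊆ Iio c := by
  intro γ hγ
  by_contra h
  rw [mem_support, trunc_trunc_of_le (not_lt.1 h), sub_self, map_zero] at hγ
  exact WithTop.top_ne_coe hγ

theorem support_trunc_subset (f : R) (c : Γ) : T.support (T.trunc f c) ⊆ T.support f := by
  intro γ hγ
  have hc : γ < c := T.support_trunc_subset_Iio f c hγ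
  rw [← sub_sub_cancel f (T.trunc f c)] at hγ
  refine (T.support_sub_subset _ _ hγ).resolve_right fun h => hc.not_ge ?_
  exact le_of_mem_support (T.le_val_sub_trunc f c) h

theorem support_sub_trunc_subset (f : R) (c : Γ) : T.support (f - T.trunc f c) ⊆ T.support f :=
  (T.support_sub_subset _ _).trans (union_subset le_rfl (T.support_trunc_subset f c))

theorem BoundsSupportMul.notMem (hT : T.BoundsSupportMul)
    (h : ∀ α ∈ T.support f, ∀ β ∈ T.support g, α + β < δ) : δ ∉ T.support (f * g) :=
  fun hδ => (hT f g δ h δ hδ).false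

theorem notMem_support_mul_of_forall_lt (hT : T.BoundsSupportMul) (hy : (a : WithTop Γ) ≤ v y)
    (h : ∀ α ∈ T.support y, ∀ β ∈ T.support g, a + β ≤ δ → α + β < δ) :
    δ ∉ T.support (y * g) := by
  set P := {u ∈ T.support g | δ < a + u}
  have hP : P.IsWF := (T.isWF_support g).mono (sep_subset _ _)
  by_cases hne : P.Nonempty
  · set w := hP.min hne
    have hlow : δ ∉ T.support (y * T.trunc g w) := by
      refine hT.notMem fun α hα β hβ => h α hα β (T.support_trunc_subset g w hβ) ?_
      exact le_of_not_gt fun hδ =>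
        hP.not_lt_min hne ⟨T.support_trunc_subset g w hβ, hδ⟩ (T.support_trunc_subset_Iio g w hβ)
    have hhigh : δ ∉ T.support (y * (g - T.trunc g w)) := by
      refine notMem_support_of_lt_val ?_
      calc (δ : WithTop Γ) < ↑(a + w) := WithTop.coe_lt_coe.2 (hP.min_mem hne).2
        _ ≤ v y + v (g - T.trunc g w) := by
          rw [WithTop.coe_add]; exact add_le_add hy (T.le_val_sub_trunc g w)
        _ = v (y * (g - T.trunc g w)) := (v.map_mul _ _).symm
    rw [← add_sub_cancel (T.trunc g w) g, mul_add]
    exact fun hδ => (T.support_add_subset _ _ hδ).elim hlow hhigh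
  · exact hT.notMem fun α hα β hβ => h α hα β hβ (le_of_not_gt fun hlt => hne ⟨β, hβ, hlt⟩)

theorem exists_descent (hT : T.BoundsSupportMul)
    (hδx : δ ∉ image2 (· + ·) (T.support x) (T.support g)) (hax : (a : WithTop Γ) ≤ v x)
    (hmem : δ ∈ T.support (x * g)) :
    ∃ (y : R) (b β : Γ), T.support y ⊆ T.support x ∧ (b : WithTop Γ) ≤ v y ∧
      δ ∈ T.support (y * g) ∧ β ∈ T.support g ∧ δ < b + β ∧
      ∀ u ∈ T.support g, δ < a + u → β < u := by
  set A := {α ∈ T.support x | ∃ β ∈ T.support g, a + β ≤ δ ∧ δ < α + β}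
  have hA : A.IsWF := (T.isWF_support x).mono (sep_subset _ _)
  have hlt : ∀ α ∈ T.support x, α ∉ A → ∀ β ∈ T.support g, a + β ≤ δ → α + β < δ :=
    fun α hα hαA β hβ hβδ =>
      lt_of_le_of_ne (le_of_not_gt fun hδ => hαA ⟨hα, β, hβ, hβδ, hδ⟩) fun h => hδx ⟨α, hα, β, hβ, h⟩
  by_cases hne : A.Nonempty
  swap
  · exact absurd hmem <| notMem_support_mul_of_forall_lt hT hax fun α hα =>
      hlt α hα fun hαA => hne ⟨α, hαA⟩
  set α₀ := hA.min hne
  obtain ⟨hα₀, β₀, hβ₀, hβ₀δ, hδβ₀⟩ := hA.min_mem hne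
  have hhead : δ ∉ T.support (T.trunc x α₀ * g) := by
    refine notMem_support_mul_of_forall_lt (a := a) hT ?_ fun α hα => ?_
    · rw [← sub_sub_cancel x (T.trunc x α₀)]
      exact v.map_le_sub hax <|
        (WithTop.coe_le_coe.2 (le_of_mem_support hax hα₀)).trans (T.le_val_sub_trunc x α₀)
    · exact hlt α (T.support_trunc_subset x α₀ hα) fun hαA =>
        hA.not_lt_min hne hαA (T.support_trunc_subset_Iio x α₀ hα)
  refine ⟨x - T.trunc x α₀, α₀, β₀, T.support_sub_trunc_subset x α₀, T.le_val_sub_trunc x α₀,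
    ?_, hβ₀, hδβ₀, fun u _ hu => lt_of_add_lt_add_left (hβ₀δ.trans_lt hu)⟩
  rw [← add_sub_cancel (T.trunc x α₀) x, add_mul] at hmem
  exact (T.support_add_subset _ _ hmem).resolve_left hhead

theorem notMem_support_mul_of_lt (hT : T.BoundsSupportMul) {β : Γ} (hβ : β ∈ T.support g) :
    ∀ (y : R) (b : Γ), δ ∉ image2 (· + ·) (T.support y) (T.support g) →
      (b : WithTop Γ) ≤ v y → δ < b + β → δ ∉ T.support (y * g) := by
  apply (T.isWF_support g).induction hβ
  intro β hβ ih y b hy hb hδ hmem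
  obtain ⟨y', b', β', hy', hb', hmem', hβ', hδ', hmin⟩ := exists_descent hT hy hb hmem
  exact ih β' hβ' (hmin β hβ hδ) y' b' (fun h => hy (image2_subset_right hy' h)) hb' hδ' hmem'

theorem support_mul_subset (hT : T.BoundsSupportMul) (f g : R) :
    T.support (f * g) ⊆ image2 (· + ·) (T.support f) (T.support g) := by
  intro δ hmem
  by_contra hδ
  obtain ⟨a, ha⟩ : ∃ a : Γ, (a : WithTop Γ) ≤ v f := by
    induction v f using WithTop.recTopCoe with
    | top => exact ⟨0, le_top⟩
    | coe b => exact ⟨b, le_rfl⟩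
  obtain ⟨y, b, β, hy, hb, hmem', hβ, hδ', -⟩ := exists_descent hT hδ ha hmem
  exact notMem_support_mul_of_lt hT hβ y b (fun h => hδ (image2_subset_right hy h)) hb hδ' hmem'

end Truncation

end AddValuation

theorem stmt_18_general
    (F : Type*) [Field F] (Γ : Type*) [AddCommGroup Γ] [LinearOrder Γ] [IsOrderedAddMonoid Γ]
    (v : F → WithTop Γ)
    (hv0 : ∀ f : F, v f = ⊤ ↔ f = 0)
    (hvm : ∀ f g : F, v (f * g) = v f + v g)
    (hva : ∀ f g : F, min (v f) (v g) ≤ v (f + g))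
    (tr : F → Γ → F)
    (T1 : ∀ (f : F) (α : Γ), (α : WithTop Γ) ≤ v (f - tr f α))
    (T2 : ∀ (f : F) (α : Γ), (α : WithTop Γ) ≤ v f → tr f α = 0)
    (T3 : ∀ (f : F) (α β : Γ), α < β → tr (tr f α) β = tr f α)
    (T4a : ∀ (f g : F) (α : Γ), tr (f + g) α = tr f α + tr g α)
    (T5 : ∀ f : F, {γ : Γ | v (f - tr f γ) = (γ : WithTop Γ)}.IsWF)
    (T6 : ∀ (f g : F) (γ : Γ),
      (∀ α ∈ {γ' : Γ | v (f - tr f γ') = (γ' : WithTop Γ)},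
        ∀ β ∈ {γ' : Γ | v (g - tr g γ') = (γ' : WithTop Γ)}, α + β < γ) →
      ∀ δ ∈ {γ' : Γ | v (f * g - tr (f * g) γ') = (γ' : WithTop Γ)}, δ < γ)
    (f g : F) :
    {γ' : Γ | v (f * g - tr (f * g) γ') = (γ' : WithTop Γ)} ⊆
      Set.image2 (· + ·) {γ' : Γ | v (f - tr f γ') = (γ' : WithTop Γ)}
        {γ' : Γ | v (g - tr g γ') = (γ' : WithTop Γ)} := by
  have hv1 : v 1 = 0 := by
    obtain ⟨a, ha⟩ := WithTop.ne_top_iff_exists.1 fun h => one_ne_zero ((hv0 1).1 h)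
    have h := hvm 1 1
    rw [one_mul, ← ha, ← WithTop.coe_add, WithTop.coe_eq_coe, left_eq_add] at h
    rw [← ha, h, WithTop.coe_zero]
  let w : AddValuation F (WithTop Γ) := .of v ((hv0 0).2 rfl) hv1 hva hvm
  let T : w.Truncation := ⟨tr, T1, T2, fun f _ _ => T3 f _ _, T4a, T5⟩
  exact T.support_mul_subset T6 f g

theorem stmt_18
    (F : Type*) [Field F] (Γ : Type*) [AddCommGroup Γ] [LinearOrder Γ] [IsOrderedAddMonoid Γ]
    (v : F → WithTop Γ)
    (hv0 : ∀ f : F, v f = ⊤ ↔ f = 0)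
    (hvm : ∀ f g : F, v (f * g) = v f + v g)
    (hva : ∀ f g : F, min (v f) (v g) ≤ v (f + g))
    (C : Subfield F)
    (hC1 : ∀ c ∈ C, c ≠ 0 → v c = 0)
    (hC2 : ∀ f : F, v f = 0 → ∃ c ∈ C, 0 < v (f - c))
    (tr : F → Γ → F)
    (T1 : ∀ (f : F) (α : Γ), (α : WithTop Γ) ≤ v (f - tr f α))
    (T2 : ∀ (f : F) (α : Γ), (α : WithTop Γ) ≤ v f → tr f α = 0)
    (T3 : ∀ (f : F) (α β : Γ), α < β → tr (tr f α) β = tr f α)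
    (T4a : ∀ (f g : F) (α : Γ), tr (f + g) α = tr f α + tr g α)
    (T4s : ∀ c ∈ C, ∀ (f : F) (α : Γ), tr (c * f) α = c * tr f α)
    (T5 : ∀ f : F, {γ : Γ | v (f - tr f γ) = (γ : WithTop Γ)}.IsWF)
    (T6 : ∀ (f g : F) (γ : Γ),
      (∀ α ∈ {γ' : Γ | v (f - tr f γ') = (γ' : WithTop Γ)},
        ∀ β ∈ {γ' : Γ | v (g - tr g γ') = (γ' : WithTop Γ)}, α + β < γ) →
      ∀ δ ∈ {γ' : Γ | v (f * g - tr (f * g) γ') = (γ' : WithTop Γ)}, δ < γ)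
    (f g : F) :
    {γ' : Γ | v (f * g - tr (f * g) γ') = (γ' : WithTop Γ)} ⊆
      Set.image2 (· + ·) {γ' : Γ | v (f - tr f γ') = (γ' : WithTop Γ)}
        {γ' : Γ | v (g - tr g γ') = (γ' : WithTop Γ)} :=
  stmt_18_general F Γ v hv0 hvm hva tr T1 T2 T3 T4a T5 T6 f g
end
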